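/- arXiv:0902.0067 — 8 statements merged into one kernel-verified Lean document; each statement's English description precedes it below -/
import Mathlib

section
/- Let T > 0 and let u : [0,T] → ℝ be continuous such that for every t ∈ [0,T] the limit L(t) := lim_{ε→0+} (1/(2ε)) ∫₀ᵗ 1_{[−ε,ε]}(u(s)) ds exists and the resulting function L is continuous. Let f : [0,T] → ℝ be continuous with strictly positive values. Then for every t ∈ [0,T], lim_{ε→0+} (1/(2ε)) ∫₀ᵗ 1_{[−ε f(s), ε f(s)]}(u(s)) ds = ∫₀ᵗ f(s) dL(s). -/
open MeasureTheory Filter Set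

private lemma aux_ii {T : ℝ} {u r : ℝ → ℝ} (hu : ContinuousOn u (Icc 0 T))
    (hr : ContinuousOn r (Icc 0 T)) {a b : ℝ} (ha : 0 ≤ a) (hab : a ≤ b) (hbT : b ≤ T) :
    IntervalIntegrable (fun s => (Icc (-(r s)) (r s)).indicator (fun _ => (1:ℝ)) (u s))
      MeasureTheory.volume a b := by
  rw [intervalIntegrable_iff]
  have hsub : Set.uIoc a b ⊆ Icc 0 T := by
    rw [Set.uIoc_of_le hab]
    exact Set.Ioc_subset_Icc_self.trans (Set.Icc_subset_Icc ha hbT)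
  have hle : MeasureTheory.volume.restrict (Set.uIoc a b)
      ≤ MeasureTheory.volume.restrict (Icc (0:ℝ) T) :=
    Measure.restrict_mono hsub le_rfl
  obtain ⟨v, hv, huv⟩ := hu.aemeasurable measurableSet_Icc
  obtain ⟨ρ, hρ, hrρ⟩ := hr.aemeasurable measurableSet_Icc
  have huv' : u =ᵐ[MeasureTheory.volume.restrict (Set.uIoc a b)] v := huv.filter_mono (ae_mono hle)
  have hrρ' : r =ᵐ[MeasureTheory.volume.restrict (Set.uIoc a b)] ρ := hrρ.filter_mono (ae_mono hle)
  constructor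
  · refine ⟨fun s => if -(ρ s) ≤ v s ∧ v s ≤ ρ s then (1:ℝ) else 0, ?_, ?_⟩
    · have hms : MeasurableSet {s : ℝ | -(ρ s) ≤ v s ∧ v s ≤ ρ s} := by
        rw [Set.setOf_and]
        exact (measurableSet_le hρ.neg hv).inter (measurableSet_le hv hρ)
      exact (Measurable.ite hms measurable_const measurable_const).stronglyMeasurable
    · filter_upwards [huv', hrρ'] with s h1 h2
      simp [Set.indicator_apply, Set.mem_Icc, h1, h2]
  · haveI : IsFiniteMeasure (MeasureTheory.volume.restrict (Set.uIoc a b)) := by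
      constructor
      rw [Measure.restrict_apply_univ, Set.uIoc_of_le hab, Real.volume_Ioc]
      exact ENNReal.ofReal_lt_top
    apply MeasureTheory.HasFiniteIntegral.of_bounded (C := 1)
    refine Eventually.of_forall fun s => ?_
    rw [Set.indicator_apply]
    split_ifs <;> simp

private lemma aux_scale {T : ℝ} {u L : ℝ → ℝ}
    (hLlim : ∀ t ∈ Icc (0:ℝ) T,
      Tendsto (fun ε : ℝ =>
          (1 / (2 * ε)) * ∫ s in (0:ℝ)..t, (Icc (-ε) ε).indicator (fun _ => (1:ℝ)) (u s))
        (nhdsWithin 0 (Ioi 0)) (nhds (L t)))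
    {c : ℝ} (hc : 0 < c) {a : ℝ} (ha : a ∈ Icc (0:ℝ) T) :
    Tendsto (fun ε : ℝ =>
        (1 / (2 * ε)) * ∫ s in (0:ℝ)..a,
          (Icc (-(ε * c)) (ε * c)).indicator (fun _ => (1:ℝ)) (u s))
      (nhdsWithin 0 (Ioi 0)) (nhds (c * L a)) := by
  have hmap : Tendsto (fun ε : ℝ => ε * c) (nhdsWithin 0 (Ioi 0)) (nhdsWithin 0 (Ioi 0)) := by
    apply tendsto_nhdsWithin_of_tendsto_nhds_of_eventually_within
    · have h : Tendsto (fun ε : ℝ => ε * c) (nhds 0) (nhds 0) := by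
        simpa using (continuous_mul_const c).tendsto (0:ℝ)
      exact h.mono_left nhdsWithin_le_nhds
    · filter_upwards [self_mem_nhdsWithin] with ε (hε : ε ∈ Ioi 0)
      exact mul_pos hε hc
  have h2 := ((hLlim a ha).comp hmap).const_mul c
  refine h2.congr' ?_
  filter_upwards [self_mem_nhdsWithin] with ε (hε : ε ∈ Ioi 0)
  have hε0 : ε ≠ 0 := ne_of_gt hε
  have hc0 : c ≠ 0 := ne_of_gt hc
  simp only [Function.comp]
  rw [← mul_assoc]
  congr 1
  field_simp

private lemma aux_sum_Ioc (μ : Measure ℝ) (f : ℝ → ℝ) (p : ℕ → ℝ)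
    (hp : ∀ i, p i ≤ p (i + 1)) :
    ∀ n : ℕ, IntegrableOn f (Ioc (p 0) (p n)) μ →
      ∫ s in Ioc (p 0) (p n), f s ∂μ
        = ∑ i ∈ Finset.range n, ∫ s in Ioc (p i) (p (i + 1)), f s ∂μ := by
  intro n
  induction n with
  | zero => intro _; simp
  | succ n ih =>
    intro hint
    have hmono : Monotone p := monotone_nat_of_le_succ hp
    have hsplit : Ioc (p 0) (p (n+1)) = Ioc (p 0) (p n) ∪ Ioc (p n) (p (n+1)) :=
      (Set.Ioc_union_Ioc_eq_Ioc (hmono (Nat.zero_le n)) (hp n)).symm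
    have h1 : IntegrableOn f (Ioc (p 0) (p n)) μ :=
      hint.mono_set (by rw [hsplit]; exact Set.subset_union_left)
    have h2 : IntegrableOn f (Ioc (p n) (p (n+1))) μ :=
      hint.mono_set (by rw [hsplit]; exact Set.subset_union_right)
    rw [hsplit, MeasureTheory.setIntegral_union (Set.Ioc_disjoint_Ioc_of_le le_rfl) measurableSet_Ioc h1 h2,
      ih h1, Finset.sum_range_succ]

/-- Lemma 2, part (ii): if `u` has a local time `L` at level `0` on `[0,T]` and `f` is a
continuous strictly positive function, then
`(1/(2ε)) ∫₀ᵗ 1_{[-ε f(s), ε f(s)]}(u(s)) ds → ∫₀ᵗ f dL` as `ε → 0+`.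
The Lebesgue–Stieltjes integral is encoded via a measure `μ` with
`μ(Ioc a b) = L b - L a` for `0 ≤ a ≤ b ≤ T`. -/
theorem local_time_scaling_continuous
    (T : ℝ) (hT : 0 < T)
    (u : ℝ → ℝ) (hu : ContinuousOn u (Icc 0 T))
    (L : ℝ → ℝ)
    (hLlim : ∀ t ∈ Icc (0:ℝ) T,
      Tendsto (fun ε : ℝ =>
          (1 / (2 * ε)) * ∫ s in (0:ℝ)..t, (Icc (-ε) ε).indicator (fun _ => (1:ℝ)) (u s))
        (nhdsWithin 0 (Ioi 0)) (nhds (L t)))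
    (hLmono : MonotoneOn L (Icc 0 T)) (hL0 : L 0 = 0)
    (hLcont : ContinuousOn L (Icc 0 T))
    (f : ℝ → ℝ) (hf : ContinuousOn f (Icc 0 T)) (hfpos : ∀ s ∈ Icc (0:ℝ) T, 0 < f s)
    (μ : Measure ℝ)
    (hμ : ∀ a b : ℝ, 0 ≤ a → a ≤ b → b ≤ T → μ (Ioc a b) = ENNReal.ofReal (L b - L a)) :
    ∀ t ∈ Icc (0:ℝ) T,
      Tendsto (fun ε : ℝ =>
          (1 / (2 * ε)) *
            ∫ s in (0:ℝ)..t, (Icc (-(ε * f s)) (ε * f s)).indicator (fun _ => (1:ℝ)) (u s))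
        (nhdsWithin 0 (Ioi 0)) (nhds (∫ s in Ioc (0:ℝ) t, f s ∂μ)) := by
  intro t ht
  obtain ⟨ht0, htT⟩ := ht
  rcases eq_or_lt_of_le ht0 with h0 | ht0'
  · rw [← h0]
    simp only [intervalIntegral.integral_same, mul_zero, Set.Ioc_self, Measure.restrict_empty,
      MeasureTheory.integral_zero_measure]
    exact tendsto_const_nhds
  · rw [Metric.tendsto_nhds]
    intro η hη
    have htmemT : t ∈ Icc (0:ℝ) T := ⟨ht0, htT⟩
    have hLt0 : 0 ≤ L t := by
      have h := hLmono (Set.left_mem_Icc.mpr hT.le) htmemT ht0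
      rwa [hL0] at h
    obtain ⟨x₀, hx₀mem, hx₀min⟩ :=
      isCompact_Icc.exists_isMinOn (Set.nonempty_Icc.mpr hT.le) hf
    have hminle : ∀ y ∈ Icc (0:ℝ) T, f x₀ ≤ f y := isMinOn_iff.mp hx₀min
    have hfmin : 0 < f x₀ := hfpos x₀ hx₀mem
    set δ : ℝ := min (f x₀ / 2) (η / (8 * (L t + 1))) with hδdef
    have hδpos : 0 < δ := lt_min (by linarith) (by positivity)
    have hδf : δ < f x₀ := lt_of_le_of_lt (min_le_left _ _) (by linarith)
    have hδη : 2 * δ * L t ≤ η / 2 := by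
      have h2 : (0:ℝ) < L t + 1 := by linarith
      have hA : (η / (8 * (L t + 1))) * (L t + 1) = η / 8 := by
        field_simp
      have hA0 : 0 ≤ η / (8 * (L t + 1)) := by positivity
      have h1 : δ * L t ≤ (η / (8 * (L t + 1))) * L t :=
        mul_le_mul_of_nonneg_right (min_le_right _ _) hLt0
      nlinarith
    obtain ⟨d, hdpos, hd⟩ := Metric.uniformContinuousOn_iff.mp
      (isCompact_Icc.uniformContinuousOn_of_continuous hf) δ hδpos
    obtain ⟨n, hn⟩ := exists_nat_gt (t / d)
    have hnpos : 0 < (n:ℝ) := lt_trans (div_pos ht0' hdpos) hn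
    have ht_lt : t < (n:ℝ) * d := (div_lt_iff₀ hdpos).mp hn
    have hmesh : t / n < d := by
      rw [div_lt_iff₀ hnpos]
      linarith [mul_comm (n:ℝ) d]
    set p : ℕ → ℝ := fun i => (i : ℝ) * (t / n) with hpdef
    have hstep0 : 0 ≤ t / n := le_of_lt (div_pos ht0' hnpos)
    have hpstep : ∀ i : ℕ, p (i + 1) = p i + t / n := by
      intro i; simp only [hpdef]; push_cast; ring
    have hpsucc : ∀ i, p i ≤ p (i + 1) := fun i => by rw [hpstep]; linarith
    have hpmono : Monotone p := monotone_nat_of_le_succ hpsucc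
    have hp0 : p 0 = 0 := by simp [hpdef]
    have hpn : p n = t := by
      simp only [hpdef]
      field_simp
    have hpmem : ∀ i ≤ n, p i ∈ Icc (0:ℝ) T := by
      intro i hi
      constructor
      · rw [← hp0]; exact hpmono (Nat.zero_le i)
      · have h := hpmono hi
        rw [hpn] at h
        exact h.trans htT
    have hosc : ∀ i < n, ∀ s ∈ Icc (p i) (p (i+1)), |f s - f (p i)| < δ := by
      intro i hi s hs
      have hpiT : p i ∈ Icc (0:ℝ) T := hpmem i (le_of_lt hi)
      have hp1t : p (i+1) ≤ t := by
        have h := hpmono (show i+1 ≤ n from hi)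
        rwa [hpn] at h
      have hsT : s ∈ Icc (0:ℝ) T :=
        ⟨le_trans hpiT.1 hs.1, le_trans (hs.2.trans hp1t) htT⟩
      have hdist : dist s (p i) < d := by
        rw [Real.dist_eq, abs_of_nonneg (by linarith [hs.1])]
        have h2 := hs.2
        rw [hpstep] at h2
        linarith
      have h := hd s hsT (p i) hpiT hdist
      rwa [Real.dist_eq] at h
    have hiif : ∀ (ε : ℝ) (a b : ℝ), 0 ≤ a → a ≤ b → b ≤ T →
        IntervalIntegrable
          (fun s => (Icc (-(ε * f s)) (ε * f s)).indicator (fun _ => (1:ℝ)) (u s))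
          MeasureTheory.volume a b :=
      fun ε a b ha hab hbT => aux_ii hu (continuousOn_const.mul hf) ha hab hbT
    have hiic : ∀ (c : ℝ) (a b : ℝ), 0 ≤ a → a ≤ b → b ≤ T →
        IntervalIntegrable
          (fun s => (Icc (-c) c).indicator (fun _ => (1:ℝ)) (u s))
          MeasureTheory.volume a b :=
      fun c a b ha hab hbT => aux_ii (r := fun _ => c) hu continuousOn_const ha hab hbT
    have hpiece : ∀ (c : ℝ), 0 < c → ∀ i, i < n →
        Tendsto (fun ε : ℝ => (1 / (2 * ε)) *
            ∫ s in (p i)..(p (i+1)),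
              (Icc (-(ε * c)) (ε * c)).indicator (fun _ => (1:ℝ)) (u s))
          (nhdsWithin 0 (Ioi 0)) (nhds (c * (L (p (i+1)) - L (p i)))) := by
      intro c hc i hi
      have h1 := aux_scale hLlim hc (hpmem (i+1) hi)
      have h2 := aux_scale hLlim hc (hpmem i (le_of_lt hi))
      have h3 := h1.sub h2
      have heq : c * L (p (i+1)) - c * L (p i) = c * (L (p (i+1)) - L (p i)) := by ring
      rw [heq] at h3
      refine Tendsto.congr (fun ε => ?_) h3
      rw [← mul_sub, intervalIntegral.integral_interval_sub_left
        (hiic (ε*c) 0 (p (i+1)) le_rfl (hpmem (i+1) hi).1 (hpmem (i+1) hi).2)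
        (hiic (ε*c) 0 (p i) le_rfl (hpmem i (le_of_lt hi)).1 (hpmem i (le_of_lt hi)).2)]
    have hlowpos : ∀ i ≤ n, 0 < f (p i) - δ := by
      intro i hi
      have h := hminle (p i) (hpmem i hi)
      linarith
    have hlow : Tendsto (fun ε : ℝ => ∑ i ∈ Finset.range n, (1 / (2 * ε)) *
          ∫ s in (p i)..(p (i+1)),
            (Icc (-(ε * (f (p i) - δ))) (ε * (f (p i) - δ))).indicator (fun _ => (1:ℝ)) (u s))
        (nhdsWithin 0 (Ioi 0))
        (nhds (∑ i ∈ Finset.range n, (f (p i) - δ) * (L (p (i+1)) - L (p i)))) := by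
      apply tendsto_finset_sum
      intro i hi
      exact hpiece (f (p i) - δ) (hlowpos i (le_of_lt (Finset.mem_range.mp hi)))
        i (Finset.mem_range.mp hi)
    have hup : Tendsto (fun ε : ℝ => ∑ i ∈ Finset.range n, (1 / (2 * ε)) *
          ∫ s in (p i)..(p (i+1)),
            (Icc (-(ε * (f (p i) + δ))) (ε * (f (p i) + δ))).indicator (fun _ => (1:ℝ)) (u s))
        (nhdsWithin 0 (Ioi 0))
        (nhds (∑ i ∈ Finset.range n, (f (p i) + δ) * (L (p (i+1)) - L (p i)))) := by
      apply tendsto_finset_sum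
      intro i hi
      have hipos : 0 < f (p i) + δ := by
        have h := hlowpos i (le_of_lt (Finset.mem_range.mp hi)); linarith
      exact hpiece (f (p i) + δ) hipos i (Finset.mem_range.mp hi)
    have hbetween : ∀ ε : ℝ, 0 < ε →
        ((∑ i ∈ Finset.range n, (1 / (2 * ε)) *
          ∫ s in (p i)..(p (i+1)),
            (Icc (-(ε * (f (p i) - δ))) (ε * (f (p i) - δ))).indicator (fun _ => (1:ℝ)) (u s))
          ≤ (1 / (2 * ε)) *
            ∫ s in (0:ℝ)..t, (Icc (-(ε * f s)) (ε * f s)).indicator (fun _ => (1:ℝ)) (u s))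
        ∧ ((1 / (2 * ε)) *
            ∫ s in (0:ℝ)..t, (Icc (-(ε * f s)) (ε * f s)).indicator (fun _ => (1:ℝ)) (u s)
          ≤ ∑ i ∈ Finset.range n, (1 / (2 * ε)) *
          ∫ s in (p i)..(p (i+1)),
            (Icc (-(ε * (f (p i) + δ))) (ε * (f (p i) + δ))).indicator (fun _ => (1:ℝ)) (u s)) := by
      intro ε hε
      have hsum : (∫ s in (0:ℝ)..t,
            (Icc (-(ε * f s)) (ε * f s)).indicator (fun _ => (1:ℝ)) (u s))
          = ∑ i ∈ Finset.range n, ∫ s in (p i)..(p (i+1)),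
              (Icc (-(ε * f s)) (ε * f s)).indicator (fun _ => (1:ℝ)) (u s) := by
        have h := (intervalIntegral.sum_integral_adjacent_intervals
          (μ := MeasureTheory.volume) (a := p) (n := n)
          (fun k hk => hiif ε (p k) (p (k+1)) (hpmem k (le_of_lt hk)).1 (hpsucc k)
            (hpmem (k+1) hk).2)).symm
        rw [hp0, hpn] at h
        exact h
      have hcmp : ∀ i ∈ Finset.range n,
          ((1 / (2 * ε)) * ∫ s in (p i)..(p (i+1)),
            (Icc (-(ε * (f (p i) - δ))) (ε * (f (p i) - δ))).indicator (fun _ => (1:ℝ)) (u s)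
            ≤ (1 / (2 * ε)) * ∫ s in (p i)..(p (i+1)),
              (Icc (-(ε * f s)) (ε * f s)).indicator (fun _ => (1:ℝ)) (u s))
          ∧ ((1 / (2 * ε)) * ∫ s in (p i)..(p (i+1)),
              (Icc (-(ε * f s)) (ε * f s)).indicator (fun _ => (1:ℝ)) (u s)
            ≤ (1 / (2 * ε)) * ∫ s in (p i)..(p (i+1)),
              (Icc (-(ε * (f (p i) + δ))) (ε * (f (p i) + δ))).indicator (fun _ => (1:ℝ)) (u s)) := by
        intro i hi
        have hin : i < n := Finset.mem_range.mp hi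
        have hnonneg : (0:ℝ) ≤ 1 / (2 * ε) := by positivity
        have hmem0 : (hpmem i (le_of_lt hin)).1 = (hpmem i (le_of_lt hin)).1 := rfl
        constructor
        · apply mul_le_mul_of_nonneg_left _ hnonneg
          apply intervalIntegral.integral_mono_on (hpsucc i)
            (hiic (ε * (f (p i) - δ)) (p i) (p (i+1)) (hpmem i (le_of_lt hin)).1 (hpsucc i)
              (hpmem (i+1) hin).2)
            (hiif ε (p i) (p (i+1)) (hpmem i (le_of_lt hin)).1 (hpsucc i) (hpmem (i+1) hin).2)
          intro s hs
          have hfs : f (p i) - δ ≤ f s := by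
            have h := abs_lt.mp (hosc i hin s hs)
            linarith [h.1]
          have hm : ε * (f (p i) - δ) ≤ ε * f s := mul_le_mul_of_nonneg_left hfs hε.le
          exact Set.indicator_le_indicator_of_subset
            (Set.Icc_subset_Icc (neg_le_neg hm) hm) (fun _ => zero_le_one) (u s)
        · apply mul_le_mul_of_nonneg_left _ hnonneg
          apply intervalIntegral.integral_mono_on (hpsucc i)
            (hiif ε (p i) (p (i+1)) (hpmem i (le_of_lt hin)).1 (hpsucc i) (hpmem (i+1) hin).2)
            (hiic (ε * (f (p i) + δ)) (p i) (p (i+1)) (hpmem i (le_of_lt hin)).1 (hpsucc i)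
              (hpmem (i+1) hin).2)
          intro s hs
          have hfs : f s ≤ f (p i) + δ := by
            have h := abs_lt.mp (hosc i hin s hs)
            linarith [h.2]
          have hm : ε * f s ≤ ε * (f (p i) + δ) := mul_le_mul_of_nonneg_left hfs hε.le
          exact Set.indicator_le_indicator_of_subset
            (Set.Icc_subset_Icc (neg_le_neg hm) hm) (fun _ => zero_le_one) (u s)
      constructor
      · rw [hsum, Finset.mul_sum]
        exact Finset.sum_le_sum (fun i hi => (hcmp i hi).1)
      · rw [hsum, Finset.mul_sum]
        exact Finset.sum_le_sum (fun i hi => (hcmp i hi).2)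
    -- μ-side
    have hμfin : μ (Ioc (0:ℝ) t) ≠ ⊤ := by
      rw [hμ 0 t le_rfl ht0 htT]
      exact ENNReal.ofReal_ne_top
    have hfμint : IntegrableOn f (Ioc (0:ℝ) t) μ := by
      obtain ⟨C, hC⟩ := isCompact_Icc.exists_bound_of_continuousOn hf
      have hIocsub : Ioc (0:ℝ) t ⊆ Icc (0:ℝ) T :=
        fun x hx => ⟨le_of_lt hx.1, hx.2.trans htT⟩
      refine ⟨(hf.mono hIocsub).aestronglyMeasurable measurableSet_Ioc, ?_⟩
      haveI : IsFiniteMeasure (μ.restrict (Ioc (0:ℝ) t)) := by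
        constructor
        rw [Measure.restrict_apply_univ]
        exact lt_top_iff_ne_top.mpr hμfin
      apply MeasureTheory.HasFiniteIntegral.of_bounded (C := C)
      exact ae_restrict_of_forall_mem measurableSet_Ioc (fun x hx => hC x (hIocsub hx))
    have hμpiece : ∀ i < n, (μ (Ioc (p i) (p (i+1)))).toReal = L (p (i+1)) - L (p i) := by
      intro i hi
      rw [hμ (p i) (p (i+1)) (hpmem i (le_of_lt hi)).1 (hpsucc i) (hpmem (i+1) hi).2,
        ENNReal.toReal_ofReal
          (sub_nonneg.mpr (hLmono (hpmem i (le_of_lt hi)) (hpmem (i+1) hi) (hpsucc i)))]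
    have hIdecomp : (∫ s in Ioc (0:ℝ) t, f s ∂μ)
        = ∑ i ∈ Finset.range n, ∫ s in Ioc (p i) (p (i+1)), f s ∂μ := by
      have h := aux_sum_Ioc μ f p hpsucc n (by rw [hp0, hpn]; exact hfμint)
      rw [hp0, hpn] at h
      exact h
    have hIpiece : ∀ i < n,
        ((f (p i) - δ) * (L (p (i+1)) - L (p i)) ≤ ∫ s in Ioc (p i) (p (i+1)), f s ∂μ)
        ∧ ((∫ s in Ioc (p i) (p (i+1)), f s ∂μ) ≤ (f (p i) + δ) * (L (p (i+1)) - L (p i))) := by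
      intro i hi
      have hsubset : Ioc (p i) (p (i+1)) ⊆ Ioc (0:ℝ) t := by
        apply Set.Ioc_subset_Ioc
        · rw [← hp0]; exact hpmono (Nat.zero_le i)
        · rw [← hpn]; exact hpmono hi
      have hint_i : IntegrableOn f (Ioc (p i) (p (i+1))) μ := hfμint.mono_set hsubset
      have hμIfin : μ (Ioc (p i) (p (i+1))) < ⊤ := by
        rw [hμ (p i) (p (i+1)) (hpmem i (le_of_lt hi)).1 (hpsucc i) (hpmem (i+1) hi).2]
        exact ENNReal.ofReal_lt_top
      have hconst_low : IntegrableOn (fun _ => f (p i) - δ) (Ioc (p i) (p (i+1))) μ :=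
        integrableOn_const hμIfin.ne
      have hconst_up : IntegrableOn (fun _ => f (p i) + δ) (Ioc (p i) (p (i+1))) μ :=
        integrableOn_const hμIfin.ne
      have hbound : ∀ x ∈ Ioc (p i) (p (i+1)), f (p i) - δ ≤ f x ∧ f x ≤ f (p i) + δ := by
        intro x hx
        have h := abs_lt.mp (hosc i hi x ⟨le_of_lt hx.1, hx.2⟩)
        exact ⟨by linarith [h.1], by linarith [h.2]⟩
      constructor
      · calc (f (p i) - δ) * (L (p (i+1)) - L (p i))
            = ∫ _ in Ioc (p i) (p (i+1)), (f (p i) - δ) ∂μ := by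
              rw [MeasureTheory.setIntegral_const, smul_eq_mul, measureReal_def, hμpiece i hi, mul_comm]
          _ ≤ ∫ s in Ioc (p i) (p (i+1)), f s ∂μ :=
              MeasureTheory.setIntegral_mono_on hconst_low hint_i measurableSet_Ioc
                (fun x hx => (hbound x hx).1)
      · calc (∫ s in Ioc (p i) (p (i+1)), f s ∂μ)
            ≤ ∫ _ in Ioc (p i) (p (i+1)), (f (p i) + δ) ∂μ :=
              MeasureTheory.setIntegral_mono_on hint_i hconst_up measurableSet_Ioc
                (fun x hx => (hbound x hx).2)
          _ = (f (p i) + δ) * (L (p (i+1)) - L (p i)) := by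
              rw [MeasureTheory.setIntegral_const, smul_eq_mul, measureReal_def, hμpiece i hi, mul_comm]
    have hSlow_le : (∑ i ∈ Finset.range n, (f (p i) - δ) * (L (p (i+1)) - L (p i)))
        ≤ ∫ s in Ioc (0:ℝ) t, f s ∂μ := by
      rw [hIdecomp]
      exact Finset.sum_le_sum (fun i hi => (hIpiece i (Finset.mem_range.mp hi)).1)
    have hSup_ge : (∫ s in Ioc (0:ℝ) t, f s ∂μ)
        ≤ ∑ i ∈ Finset.range n, (f (p i) + δ) * (L (p (i+1)) - L (p i)) := by
      rw [hIdecomp]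
      exact Finset.sum_le_sum (fun i hi => (hIpiece i (Finset.mem_range.mp hi)).2)
    have hgap : (∑ i ∈ Finset.range n, (f (p i) + δ) * (L (p (i+1)) - L (p i)))
        - (∑ i ∈ Finset.range n, (f (p i) - δ) * (L (p (i+1)) - L (p i))) ≤ η / 2 := by
      have htel : (∑ i ∈ Finset.range n, (L (p (i+1)) - L (p i))) = L t := by
        have h := Finset.sum_range_sub (fun i => L (p i)) n
        rw [h, hpn, hp0, hL0, sub_zero]
      have hdiff : (∑ i ∈ Finset.range n, (f (p i) + δ) * (L (p (i+1)) - L (p i)))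
          - (∑ i ∈ Finset.range n, (f (p i) - δ) * (L (p (i+1)) - L (p i)))
          = ∑ i ∈ Finset.range n, 2 * δ * (L (p (i+1)) - L (p i)) := by
        rw [← Finset.sum_sub_distrib]
        apply Finset.sum_congr rfl
        intro i _
        ring
      rw [hdiff, ← Finset.mul_sum, htel]
      exact hδη
    have h1 := hlow.eventually (eventually_gt_nhds
      (show (∑ i ∈ Finset.range n, (f (p i) - δ) * (L (p (i+1)) - L (p i))) - η / 2
        < ∑ i ∈ Finset.range n, (f (p i) - δ) * (L (p (i+1)) - L (p i)) by linarith))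
    have h2 := hup.eventually (eventually_lt_nhds
      (show (∑ i ∈ Finset.range n, (f (p i) + δ) * (L (p (i+1)) - L (p i)))
        < (∑ i ∈ Finset.range n, (f (p i) + δ) * (L (p (i+1)) - L (p i))) + η / 2 by linarith))
    filter_upwards [h1, h2, self_mem_nhdsWithin] with ε hε1 hε2 (hεpos : ε ∈ Ioi 0)
    obtain ⟨hb1, hb2⟩ := hbetween ε hεpos
    rw [Real.dist_eq, abs_sub_lt_iff]
    constructor
    · linarith
    · linarith
end

section
/- Let T > 0 and let x = (x₁, x₂) : [0,T] → ℝ² be a continuous path with x₁(s) > 0 for all s ∈ [0,T]. Write r(s) = √(x₁(s)² + x₂(s)²) > 0 and φ(s) = arctan(x₂(s)/x₁(s)) ∈ (−π/2, π/2) for the polar coordinates of x(s). Assume that for every t ∈ [0,T] the limit L(t) := lim_{ε→0+} (1/(2ε)) ∫₀ᵗ 1_{[−ε,ε]}(x₂(s)) ds exists and the resulting function L is continuous. Then for every t ∈ [0,T] the limit lim_{ε→0+} (1/(2ε)) ∫₀ᵗ 1_{[−ε,ε]}(φ(s)) ds exists and equals ∫₀ᵗ r(s) dL(s); that is, the local time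 of the angular component φ at level 0 equals the Stieltjes integral of r against the local time of x₂ at level 0. -/
open MeasureTheory Filter Set


private lemma ind_integrableOn {g : ℝ → ℝ} {a b : ℝ}
    (hg : AEMeasurable g (volume.restrict (Ioc a b))) (c d : ℝ) :
    IntegrableOn (fun s => (Icc c d).indicator (fun _ => (1:ℝ)) (g s)) (Ioc a b) := by
  obtain ⟨g', hg'm, hgg'⟩ := hg
  have hmeas : AEStronglyMeasurable (fun s => (Icc c d).indicator (fun _ => (1:ℝ)) (g s))
      (volume.restrict (Ioc a b)) := by
    have h1 : Measurable fun s => (Icc c d).indicator (fun _ => (1:ℝ)) (g' s) := by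
      have he : (fun s => (Icc c d).indicator (fun _ => (1:ℝ)) (g' s))
          = (g' ⁻¹' (Icc c d)).indicator (fun _ => (1:ℝ)) := by
        funext s
        exact (Set.indicator_comp_right g' (g := fun _ => (1:ℝ))).symm
      rw [he]
      exact measurable_const.indicator (hg'm measurableSet_Icc)
    refine h1.aestronglyMeasurable.congr ?_
    filter_upwards [hgg'] with s hs
    rw [hs]
  refine (integrableOn_const_iff (C := (1:ℝ)).mpr (Or.inr measure_Ioc_lt_top)).mono' hmeas ?_
  refine ae_of_all _ fun s => ?_
  by_cases h : g s ∈ Icc c d <;> simp [Set.indicator_apply, h]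

private lemma intInt_ind' {g : ℝ → ℝ} {a b : ℝ} (hab : a ≤ b)
    (hg : AEMeasurable g (volume.restrict (Ioc a b))) (c d : ℝ) :
    IntervalIntegrable (fun s => (Icc c d).indicator (fun _ => (1:ℝ)) (g s)) volume a b := by
  rw [intervalIntegrable_iff, uIoc_of_le hab]
  exact ind_integrableOn hg c d

private lemma tan_div_tendsto' :
    Tendsto (fun ε : ℝ => Real.tan ε / ε) (nhdsWithin 0 (Ioi 0)) (nhds 1) := by
  have h : HasDerivAt Real.tan 1 0 := by
    have h0 := Real.hasDerivAt_tan (x := 0) (by norm_num [Real.cos_zero])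
    norm_num [Real.cos_zero] at h0
    exact h0
  have h2 := hasDerivAt_iff_tendsto_slope.mp h
  have h3 : Tendsto (slope Real.tan 0) (nhdsWithin 0 (Ioi 0)) (nhds 1) :=
    h2.mono_left (nhdsWithin_mono 0 fun x hx => ne_of_gt hx)
  refine h3.congr fun x => ?_
  simp [slope_def_field, Real.tan_zero]

private lemma arctan_mem_iff' {u ε : ℝ} (h1 : 0 < ε) (h2 : ε < Real.pi / 2) :
    Real.arctan u ∈ Icc (-ε) ε ↔ u ∈ Icc (-(Real.tan ε)) (Real.tan ε) := by
  have key : ∀ v : ℝ, Real.arctan v ≤ ε ↔ v ≤ Real.tan ε := by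
    intro v
    constructor
    · intro h
      have hm := Real.strictMonoOn_tan.monotoneOn
        ⟨Real.neg_pi_div_two_lt_arctan v, Real.arctan_lt_pi_div_two v⟩
        ⟨by linarith [Real.pi_pos], h2⟩ h
      rwa [Real.tan_arctan] at hm
    · intro h
      have hm := Real.arctan_strictMono.monotone h
      rwa [Real.arctan_tan (by linarith [Real.pi_pos]) h2] at hm
  have key2 : ∀ v : ℝ, -ε ≤ Real.arctan v ↔ -(Real.tan ε) ≤ v := by
    intro v
    rw [neg_le, ← Real.arctan_neg, key (-v), neg_le]
  simp only [mem_Icc]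
  rw [key u, key2 u]


private lemma stepA' {x₂ L : ℝ → ℝ} {T a b : ℝ}
    (hmeas : AEMeasurable x₂ (volume.restrict (Ioc 0 T)))
    (ha : 0 ≤ a) (hab : a ≤ b) (hbT : b ≤ T)
    (hLa : Tendsto (fun ε : ℝ =>
        (1 / (2 * ε)) * ∫ s in (0:ℝ)..a, (Icc (-ε) ε).indicator (fun _ => (1:ℝ)) (x₂ s))
      (nhdsWithin 0 (Ioi 0)) (nhds (L a)))
    (hLb : Tendsto (fun ε : ℝ =>
        (1 / (2 * ε)) * ∫ s in (0:ℝ)..b, (Icc (-ε) ε).indicator (fun _ => (1:ℝ)) (x₂ s))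
      (nhdsWithin 0 (Ioi 0)) (nhds (L b))) :
    Tendsto (fun ε : ℝ =>
        (1 / (2 * ε)) * ∫ s in a..b, (Icc (-ε) ε).indicator (fun _ => (1:ℝ)) (x₂ s))
      (nhdsWithin 0 (Ioi 0)) (nhds (L b - L a)) := by
  have hbT' : b ≤ T := hbT
  have key : ∀ ε : ℝ,
      (∫ s in a..b, (Icc (-ε) ε).indicator (fun _ => (1:ℝ)) (x₂ s))
        = (∫ s in (0:ℝ)..b, (Icc (-ε) ε).indicator (fun _ => (1:ℝ)) (x₂ s))
          - (∫ s in (0:ℝ)..a, (Icc (-ε) ε).indicator (fun _ => (1:ℝ)) (x₂ s)) := by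
    intro ε
    have h1 : IntervalIntegrable (fun s => (Icc (-ε) ε).indicator (fun _ => (1:ℝ)) (x₂ s))
        volume 0 a :=
      intInt_ind' ha (hmeas.mono_measure
        (Measure.restrict_mono (Ioc_subset_Ioc le_rfl (hab.trans hbT)) le_rfl)) _ _
    have h2 : IntervalIntegrable (fun s => (Icc (-ε) ε).indicator (fun _ => (1:ℝ)) (x₂ s))
        volume a b :=
      intInt_ind' hab (hmeas.mono_measure
        (Measure.restrict_mono (Ioc_subset_Ioc ha hbT) le_rfl)) _ _
    have := intervalIntegral.integral_add_adjacent_intervals h1 h2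
    linarith [this]
  have hsub := hLb.sub hLa
  refine hsub.congr fun ε => ?_
  rw [key ε]; ring

private lemma stepB' {x₂ L : ℝ → ℝ} {T a b c : ℝ} (hc : 0 < c)
    (hmeas : AEMeasurable x₂ (volume.restrict (Ioc 0 T)))
    (ha : 0 ≤ a) (hab : a ≤ b) (hbT : b ≤ T)
    (hLa : Tendsto (fun ε : ℝ =>
        (1 / (2 * ε)) * ∫ s in (0:ℝ)..a, (Icc (-ε) ε).indicator (fun _ => (1:ℝ)) (x₂ s))
      (nhdsWithin 0 (Ioi 0)) (nhds (L a)))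
    (hLb : Tendsto (fun ε : ℝ =>
        (1 / (2 * ε)) * ∫ s in (0:ℝ)..b, (Icc (-ε) ε).indicator (fun _ => (1:ℝ)) (x₂ s))
      (nhdsWithin 0 (Ioi 0)) (nhds (L b))) :
    Tendsto (fun ε : ℝ => (1 / (2 * ε)) * ∫ s in a..b,
        (Icc (-(c * Real.tan ε)) (c * Real.tan ε)).indicator (fun _ => (1:ℝ)) (x₂ s))
      (nhdsWithin 0 (Ioi 0)) (nhds (c * (L b - L a))) := by
  have hA := stepA' hmeas ha hab hbT hLa hLb
  have hmap : Tendsto (fun ε : ℝ => c * Real.tan ε)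
      (nhdsWithin 0 (Ioi 0)) (nhdsWithin 0 (Ioi 0)) := by
    apply tendsto_nhdsWithin_of_tendsto_nhds_of_eventually_within
    · have hcont : ContinuousAt (fun ε : ℝ => c * Real.tan ε) 0 :=
        continuousAt_const.mul (Real.continuousAt_tan.mpr (by norm_num [Real.cos_zero]))
      have := hcont.tendsto
      simp only [Real.tan_zero, mul_zero] at this
      exact this.mono_left nhdsWithin_le_nhds
    · filter_upwards [Ioo_mem_nhdsGT_of_mem
        (⟨le_refl (0:ℝ), by positivity⟩ : (0:ℝ) ∈ Ico (0:ℝ) (Real.pi/2))] with ε hε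
      exact mul_pos hc (Real.tan_pos_of_pos_of_lt_pi_div_two hε.1 hε.2)
  have htan : Tendsto (fun ε : ℝ => c * (Real.tan ε / ε))
      (nhdsWithin 0 (Ioi 0)) (nhds c) := by
    have := tendsto_const_nhds (x := c) (f := nhdsWithin (0:ℝ) (Ioi 0)) |>.mul tan_div_tendsto'
    simpa using this
  have hmul := htan.mul (hA.comp hmap)
  rw [show c * (L b - L a) = c * (L b - L a) from rfl] at hmul
  refine Tendsto.congr' ?_ hmul
  filter_upwards [Ioo_mem_nhdsGT_of_mem
    (⟨le_refl (0:ℝ), by positivity⟩ : (0:ℝ) ∈ Ico (0:ℝ) (Real.pi/2))] with ε hε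
  have hε0 : ε ≠ 0 := ne_of_gt hε.1
  have htp : (0:ℝ) < Real.tan ε := Real.tan_pos_of_pos_of_lt_pi_div_two hε.1 hε.2
  simp only [Function.comp]
  field_simp


private lemma stepD' {x₂ L : ℝ → ℝ} {T t : ℝ}
    (hx₂ : ContinuousOn x₂ (Icc 0 T))
    (hLlim : ∀ u ∈ Icc (0:ℝ) T,
      Tendsto (fun ε : ℝ =>
          (1 / (2 * ε)) * ∫ s in (0:ℝ)..u, (Icc (-ε) ε).indicator (fun _ => (1:ℝ)) (x₂ s))
        (nhdsWithin 0 (Ioi 0)) (nhds (L u)))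
    (μ : Measure ℝ)
    (hμ : ∀ a b : ℝ, 0 ≤ a → a ≤ b → b ≤ T → μ (Ioc a b) = ENNReal.ofReal (L b - L a))
    (ht : t ∈ Icc (0:ℝ) T) :
    μ {s | s ∈ Ioc (0:ℝ) t ∧ x₂ s ≠ 0} = 0 := by
  have hmeas : AEMeasurable x₂ (volume.restrict (Ioc 0 T)) :=
    (hx₂.mono Ioc_subset_Icc_self).aemeasurable measurableSet_Ioc
  apply measure_null_of_locally_null
  intro s hs
  obtain ⟨hsIoc, hsx⟩ := hs
  have hsIcc : s ∈ Icc (0:ℝ) T := ⟨hsIoc.1.le, hsIoc.2.trans ht.2⟩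
  set δ := |x₂ s| / 2 with hδdef
  have hδ : 0 < δ := by
    have : x₂ s ≠ 0 := hsx
    have := abs_pos.mpr this
    positivity
  obtain ⟨η, hη, hball⟩ := Metric.continuousWithinAt_iff.mp (hx₂ s hsIcc) δ hδ
  set a := max (s - η/2) 0 with hadef
  set b := min (s + η/2) T with hbdef
  have ha0 : 0 ≤ a := le_max_right _ _
  have has : a < s := max_lt (by linarith) hsIoc.1
  have hsb : s ≤ b := le_min (by linarith) hsIcc.2
  have hbT : b ≤ T := min_le_right _ _
  have hab : a ≤ b := has.le.trans hsb
  -- on Icc a b, |x₂ u| > δ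
  have hbig : ∀ u ∈ Icc a b, δ < |x₂ u| := by
    intro u hu
    have huIcc : u ∈ Icc (0:ℝ) T := ⟨ha0.trans hu.1, hu.2.trans hbT⟩
    have hdist : dist u s < η := by
      rw [Real.dist_eq, abs_sub_lt_iff]
      constructor
      · have : a ≤ u := hu.1
        have : s - η/2 ≤ u := le_trans (le_max_left _ _) hu.1
        have : u ≤ s + η/2 := hu.2.trans (min_le_left _ _)
        linarith
      · have : s - η/2 ≤ u := le_trans (le_max_left _ _) hu.1
        linarith
    have := hball huIcc hdist
    rw [Real.dist_eq] at this
    have h1 : |x₂ s| - |x₂ u| ≤ |x₂ u - x₂ s| := by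
      have := abs_sub_abs_le_abs_sub (x₂ s) (x₂ u)
      rw [abs_sub_comm] at this
      linarith
    rw [hδdef] at this ⊢
    linarith
  -- L b - L a = 0
  have hLab : L b - L a = 0 := by
    have h1 : Tendsto (fun ε : ℝ =>
        (1 / (2 * ε)) * ∫ u in a..b, (Icc (-ε) ε).indicator (fun _ => (1:ℝ)) (x₂ u))
        (nhdsWithin 0 (Ioi 0)) (nhds (L b - L a)) :=
      stepA' hmeas ha0 hab hbT (hLlim a ⟨ha0, hab.trans hbT⟩) (hLlim b ⟨ha0.trans hab, hbT⟩)
    have h2 : Tendsto (fun ε : ℝ =>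
        (1 / (2 * ε)) * ∫ u in a..b, (Icc (-ε) ε).indicator (fun _ => (1:ℝ)) (x₂ u))
        (nhdsWithin 0 (Ioi 0)) (nhds 0) := by
      have hev : ∀ᶠ ε in nhdsWithin (0:ℝ) (Ioi 0), (1 / (2 * ε)) *
          (∫ u in a..b, (Icc (-ε) ε).indicator (fun _ => (1:ℝ)) (x₂ u)) = 0 := by
        filter_upwards [Ioo_mem_nhdsGT_of_mem
          (⟨le_refl (0:ℝ), hδ⟩ : (0:ℝ) ∈ Ico (0:ℝ) δ)] with ε hε
        have hzero : ∫ u in a..b, (Icc (-ε) ε).indicator (fun _ => (1:ℝ)) (x₂ u) = 0 := by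
          rw [show (0:ℝ) = ∫ _ in a..b, (0:ℝ) from (intervalIntegral.integral_zero).symm]
          apply intervalIntegral.integral_congr
          intro u hu
          rw [uIcc_of_le hab] at hu
          have := hbig u hu
          have hnot : x₂ u ∉ Icc (-ε) ε := by
            rw [mem_Icc]
            intro hmem
            have : |x₂ u| ≤ ε := abs_le.mpr hmem
            linarith [hε.2]
          simp [indicator_of_notMem hnot]
        rw [hzero, mul_zero]
      exact Tendsto.congr' (EventuallyEq.symm hev) tendsto_const_nhds
    exact tendsto_nhds_unique h1 h2
  -- conclude
  refine ⟨{v | v ∈ Ioc (0:ℝ) t ∧ x₂ v ≠ 0} ∩ Ioo a (s + η/2), inter_mem_nhdsWithin _ ?_, ?_⟩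
  · exact Ioo_mem_nhds has (by linarith)
  · apply measure_mono_null (t := Ioc a b) ?_ ?_
    · rintro v ⟨⟨hvIoc, -⟩, hvIoo⟩
      exact ⟨hvIoo.1, le_min hvIoo.2.le (hvIoc.2.trans ht.2)⟩
    · rw [hμ a b ha0 hab hbT, hLab]
      simp


set_option maxHeartbeats 1000000 in
/-- Lemma 3 of the paper (deterministic form, in the half-plane `x₁ > 0`): if the path
`x = (x₁, x₂)` is continuous with `x₁ > 0`, and `x₂` has a local time `L` at level `0`,
then the angular component `φ = arctan(x₂/x₁)` has a local time at level `0`, equal to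
the Stieltjes integral `∫₀ᵗ r(s) dL(s)` of the radius `r = √(x₁² + x₂²)` against `L`.
The Stieltjes integral is encoded via a measure `μ` with `μ(Ioc a b) = L b - L a`
for `0 ≤ a ≤ b ≤ T`. -/
theorem local_time_angular_component
    (T : ℝ) (hT : 0 < T)
    (x₁ x₂ : ℝ → ℝ)
    (hx₁ : ContinuousOn x₁ (Icc 0 T)) (hx₂ : ContinuousOn x₂ (Icc 0 T))
    (hx₁pos : ∀ s ∈ Icc (0:ℝ) T, 0 < x₁ s)
    (L : ℝ → ℝ)
    (hLlim : ∀ t ∈ Icc (0:ℝ) T,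
      Tendsto (fun ε : ℝ =>
          (1 / (2 * ε)) * ∫ s in (0:ℝ)..t, (Icc (-ε) ε).indicator (fun _ => (1:ℝ)) (x₂ s))
        (nhdsWithin 0 (Ioi 0)) (nhds (L t)))
    (hLmono : MonotoneOn L (Icc 0 T)) (hL0 : L 0 = 0)
    (hLcont : ContinuousOn L (Icc 0 T))
    (μ : Measure ℝ)
    (hμ : ∀ a b : ℝ, 0 ≤ a → a ≤ b → b ≤ T → μ (Ioc a b) = ENNReal.ofReal (L b - L a)) :
    ∀ t ∈ Icc (0:ℝ) T,
      Tendsto (fun ε : ℝ =>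
          (1 / (2 * ε)) *
            ∫ s in (0:ℝ)..t,
              (Icc (-ε) ε).indicator (fun _ => (1:ℝ)) (Real.arctan (x₂ s / x₁ s)))
        (nhdsWithin 0 (Ioi 0))
        (nhds (∫ s in Ioc (0:ℝ) t, Real.sqrt ((x₁ s) ^ 2 + (x₂ s) ^ 2) ∂μ)) := by
  intro t ht
  obtain ⟨ht0, htT⟩ := ht
  have hpi := Real.pi_pos
  have hIocIcc : Ioc (0:ℝ) t ⊆ Icc 0 T := fun s hs => ⟨hs.1.le, hs.2.trans htT⟩
  have hmx₂ : AEMeasurable x₂ (volume.restrict (Ioc 0 T)) :=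
    (hx₂.mono Ioc_subset_Icc_self).aemeasurable measurableSet_Ioc
  have hφcont : ContinuousOn (fun s => Real.arctan (x₂ s / x₁ s)) (Icc 0 T) :=
    Real.continuous_arctan.comp_continuousOn
      (hx₂.div hx₁ fun s hs => (hx₁pos s hs).ne')
  have hmφ : AEMeasurable (fun s => Real.arctan (x₂ s / x₁ s)) (volume.restrict (Ioc 0 T)) :=
    (hφcont.mono Ioc_subset_Icc_self).aemeasurable measurableSet_Ioc
  -- replace the integrand r by x₁
  have hnull : μ {s | s ∈ Ioc (0:ℝ) t ∧ x₂ s ≠ 0} = 0 := stepD' hx₂ hLlim μ hμ ⟨ht0, htT⟩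
  have hIeq : (∫ s in Ioc (0:ℝ) t, Real.sqrt ((x₁ s) ^ 2 + (x₂ s) ^ 2) ∂μ)
      = ∫ s in Ioc (0:ℝ) t, x₁ s ∂μ := by
    apply setIntegral_congr_ae measurableSet_Ioc
    have hae : ∀ᵐ s ∂μ, ¬(s ∈ Ioc (0:ℝ) t ∧ x₂ s ≠ 0) := by
      rw [ae_iff]
      refine measure_mono_null (fun a ha => ?_) hnull
      simp only [not_not, mem_setOf_eq] at ha ⊢
      exact ha
    filter_upwards [hae] with s hs hsIoc
    have hx2 : x₂ s = 0 := by
      by_contra h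
      exact hs ⟨hsIoc, h⟩
    have hx1 : 0 < x₁ s := hx₁pos s (hIocIcc hsIoc)
    rw [hx2]
    simp [Real.sqrt_sq hx1.le]
  rw [hIeq]
  set I := ∫ s in Ioc (0:ℝ) t, x₁ s ∂μ with hIdef
  -- integrability of x₁ w.r.t. μ
  have hμfin : μ (Ioc (0:ℝ) t) < ⊤ := by
    rw [hμ 0 t le_rfl ht0 htT]; exact ENNReal.ofReal_lt_top
  have hx₁m : AEMeasurable x₁ (μ.restrict (Ioc (0:ℝ) t)) :=
    (hx₁.mono hIocIcc).aemeasurable measurableSet_Ioc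
  obtain ⟨B, hB⟩ := isCompact_Icc.exists_bound_of_continuousOn hx₁
  have hx₁int : IntegrableOn x₁ (Ioc (0:ℝ) t) μ := by
    refine Integrable.mono' ((integrableOn_const_iff (C := B)).mpr (Or.inr hμfin))
      hx₁m.aestronglyMeasurable ?_
    exact (ae_restrict_iff' measurableSet_Ioc).mpr (ae_of_all _ fun s hs => hB s (hIocIcc hs))
  -- minimum of x₁
  obtain ⟨smin, hsmin, hminOn⟩ := isCompact_Icc.exists_isMinOn (nonempty_Icc.mpr hT.le) hx₁
  set m := x₁ smin with hmdef
  have hm0 : 0 < m := hx₁pos smin hsmin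
  have hmle : ∀ u ∈ Icc (0:ℝ) T, m ≤ x₁ u := fun u hu => hminOn hu
  -- L facts
  have hLT0 : 0 ≤ L T := by
    rw [← hL0]
    exact hLmono (left_mem_Icc.mpr hT.le) (right_mem_Icc.mpr hT.le) hT.le
  have hLt0 : 0 ≤ L t := by
    rw [← hL0]
    exact hLmono (left_mem_Icc.mpr hT.le) ⟨ht0, htT⟩ ht0
  have hLtT : L t ≤ L T := hLmono ⟨ht0, htT⟩ (right_mem_Icc.mpr hT.le) htT
  rw [Metric.tendsto_nhds]
  intro η hη
  -- choose θ
  set θ := min (m/2) (η/(4*(L T + 1))) with hθdef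
  have hθpos : 0 < θ := lt_min (by positivity) (by positivity)
  have hθm : θ ≤ m/2 := min_le_left _ _
  have hθLt : 2 * θ * L t ≤ η / 2 := by
    have h1 : θ ≤ η/(4*(L T + 1)) := min_le_right _ _
    have h2 : (0:ℝ) < 4*(L T + 1) := by positivity
    have h3 : (η/(4*(L T + 1))) * (4*(L T + 1)) = η := div_mul_cancel₀ _ h2.ne'
    nlinarith [mul_le_mul_of_nonneg_right h1 hLt0, hθpos.le]
  -- uniform continuity of x₁
  have hx₁uc : UniformContinuousOn x₁ (Icc 0 T) :=
    isCompact_Icc.uniformContinuousOn_of_continuous hx₁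
  rw [Metric.uniformContinuousOn_iff] at hx₁uc
  obtain ⟨κ, hκ, hκball⟩ := hx₁uc θ hθpos
  -- choose n
  obtain ⟨n₀, hn₀⟩ := exists_nat_gt (t / κ)
  set n := n₀ + 1 with hndef
  have hnpos : (0:ℝ) < (n:ℝ) := by positivity
  have hstep : t / (n:ℝ) < κ := by
    rw [div_lt_iff₀ hnpos]
    have h1 : t / κ < (n:ℝ) := lt_of_lt_of_le hn₀ (by exact_mod_cast Nat.le_succ n₀)
    rw [div_lt_iff₀ hκ] at h1
    linarith
  set p : ℕ → ℝ := fun i => (i : ℝ) * t / (n:ℝ) with hpdef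
  have hp0 : p 0 = 0 := by simp [hpdef]
  have hpn : p n = t := by rw [hpdef]; exact mul_div_cancel_left₀ t hnpos.ne'
  have hpmono : ∀ i, p i ≤ p (i+1) := by
    intro i
    have key : (i:ℝ) * t / (n:ℝ) ≤ ((i:ℝ)+1) * t / (n:ℝ) := by
      gcongr
      linarith
    simp only [hpdef]
    exact_mod_cast key
  have hpmem : ∀ i, i ≤ n → p i ∈ Icc (0:ℝ) t := by
    intro i hi
    constructor
    · apply div_nonneg (mul_nonneg (Nat.cast_nonneg i) ht0) hnpos.le
    · rw [hpdef]
      rw [div_le_iff₀ hnpos]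
      have : (i:ℝ) ≤ (n:ℝ) := by exact_mod_cast hi
      nlinarith
  have hdiff : ∀ i, p (i+1) - p i = t / (n:ℝ) := by
    intro i
    rw [hpdef]
    push_cast
    field_simp
    ring
  have hpIcc : ∀ i, i < n → ∀ s ∈ Icc (p i) (p (i+1)), s ∈ Icc (0:ℝ) T := by
    intro i hi s hs
    exact ⟨(hpmem i hi.le).1.trans hs.1,
      (hs.2.trans (hpmem (i+1) hi).2).trans htT⟩
  have hclose : ∀ i, i < n → ∀ s ∈ Icc (p i) (p (i+1)), |x₁ s - x₁ (p i)| < θ := by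
    intro i hi s hs
    have h1 := hκball s (hpIcc i hi s hs) (p i) (hpIcc i hi (p i) ⟨le_rfl, hpmono i⟩) ?_
    · rwa [Real.dist_eq] at h1
    · rw [Real.dist_eq, abs_sub_lt_iff]
      have := hdiff i
      constructor
      · linarith [hs.2, hdiff i, hstep]
      · linarith [hs.1, hκ]
  -- bounds cl/ch
  have hclpos : ∀ i, i < n → 0 < x₁ (p i) - θ := by
    intro i hi
    have := hmle (p i) (hpIcc i hi (p i) ⟨le_rfl, hpmono i⟩)
    linarith
  have hΔL : ∀ i, i < n → 0 ≤ L (p (i+1)) - L (p i) := by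
    intro i hi
    have h1 := hpIcc i hi (p i) ⟨le_rfl, hpmono i⟩
    have h2 := hpIcc i hi (p (i+1)) ⟨hpmono i, le_rfl⟩
    exact sub_nonneg.mpr (hLmono h1 h2 (hpmono i))
  -- limits of the upper and lower Riemann-type sums
  have hUlim : Tendsto (fun ε : ℝ => ∑ i ∈ Finset.range n, (1 / (2 * ε)) *
      ∫ s in p i..p (i+1), (Icc (-((x₁ (p i) + θ) * Real.tan ε)) ((x₁ (p i) + θ) * Real.tan ε)).indicator
        (fun _ => (1:ℝ)) (x₂ s)) (nhdsWithin 0 (Ioi 0))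
      (nhds (∑ i ∈ Finset.range n, (x₁ (p i) + θ) * (L (p (i+1)) - L (p i)))) := by
    apply tendsto_finset_sum
    intro i hi
    rw [Finset.mem_range] at hi
    have h1 := hpIcc i hi (p i) ⟨le_rfl, hpmono i⟩
    have h2 := hpIcc i hi (p (i+1)) ⟨hpmono i, le_rfl⟩
    exact stepB' (by linarith [hclpos i hi, hθpos]) hmx₂ h1.1 (hpmono i) h2.2
      (hLlim (p i) h1) (hLlim (p (i+1)) h2)
  have hLolim : Tendsto (fun ε : ℝ => ∑ i ∈ Finset.range n, (1 / (2 * ε)) *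
      ∫ s in p i..p (i+1), (Icc (-((x₁ (p i) - θ) * Real.tan ε)) ((x₁ (p i) - θ) * Real.tan ε)).indicator
        (fun _ => (1:ℝ)) (x₂ s)) (nhdsWithin 0 (Ioi 0))
      (nhds (∑ i ∈ Finset.range n, (x₁ (p i) - θ) * (L (p (i+1)) - L (p i)))) := by
    apply tendsto_finset_sum
    intro i hi
    rw [Finset.mem_range] at hi
    have h1 := hpIcc i hi (p i) ⟨le_rfl, hpmono i⟩
    have h2 := hpIcc i hi (p (i+1)) ⟨hpmono i, le_rfl⟩
    exact stepB' (hclpos i hi) hmx₂ h1.1 (hpmono i) h2.2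
      (hLlim (p i) h1) (hLlim (p (i+1)) h2)
  set SU := ∑ i ∈ Finset.range n, (x₁ (p i) + θ) * (L (p (i+1)) - L (p i)) with hSUdef
  set SL := ∑ i ∈ Finset.range n, (x₁ (p i) - θ) * (L (p (i+1)) - L (p i)) with hSLdef
  -- I between SL and SU
  have hμi : ∀ i, i < n → (μ (Ioc (p i) (p (i+1)))).toReal = L (p (i+1)) - L (p i) := by
    intro i hi
    have h1 := hpIcc i hi (p i) ⟨le_rfl, hpmono i⟩
    have h2 := hpIcc i hi (p (i+1)) ⟨hpmono i, le_rfl⟩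
    rw [hμ _ _ h1.1 (hpmono i) h2.2, ENNReal.toReal_ofReal (hΔL i hi)]
  have hsubIoc : ∀ i, i < n → Ioc (p i) (p (i+1)) ⊆ Ioc (0:ℝ) t := by
    intro i hi
    exact Ioc_subset_Ioc (hpmem i hi.le).1 (hpmem (i+1) hi).2
  have hIsplit : I = ∑ i ∈ Finset.range n, ∫ s in Ioc (p i) (p (i+1)), x₁ s ∂μ := by
    have hint : ∀ k < n, IntervalIntegrable x₁ μ (p k) (p (k+1)) := by
      intro k hk
      rw [intervalIntegrable_iff, uIoc_of_le (hpmono k)]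
      exact hx₁int.mono_set (hsubIoc k hk)
    have hsum := intervalIntegral.sum_integral_adjacent_intervals hint
    rw [hp0, hpn] at hsum
    rw [hIdef, ← intervalIntegral.integral_of_le ht0, ← hsum]
    exact Finset.sum_congr rfl fun i hi => (intervalIntegral.integral_of_le (hpmono i))
  have hIle : I ≤ SU := by
    rw [hIsplit, hSUdef]
    apply Finset.sum_le_sum
    intro i hi
    rw [Finset.mem_range] at hi
    have hble : ∀ s ∈ Ioc (p i) (p (i+1)), x₁ s ≤ x₁ (p i) + θ := by
      intro s hs
      have := hclose i hi s ⟨hs.1.le, hs.2⟩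
      rw [abs_sub_lt_iff] at this
      linarith [this.1]
    have hmono := setIntegral_mono_on (hx₁int.mono_set (hsubIoc i hi))
      ((integrableOn_const_iff (C := x₁ (p i) + θ)).mpr
        (Or.inr ((measure_mono (hsubIoc i hi)).trans_lt hμfin)))
      measurableSet_Ioc hble
    rw [setIntegral_const, measureReal_def, hμi i hi, smul_eq_mul] at hmono
    rw [mul_comm]
    exact hmono
  have hIge : SL ≤ I := by
    rw [hIsplit, hSLdef]
    apply Finset.sum_le_sum
    intro i hi
    rw [Finset.mem_range] at hi
    have hble : ∀ s ∈ Ioc (p i) (p (i+1)), x₁ (p i) - θ ≤ x₁ s := by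
      intro s hs
      have := hclose i hi s ⟨hs.1.le, hs.2⟩
      rw [abs_sub_lt_iff] at this
      linarith [this.2]
    have hmono := setIntegral_mono_on
      ((integrableOn_const_iff (C := x₁ (p i) - θ)).mpr
        (Or.inr ((measure_mono (hsubIoc i hi)).trans_lt hμfin)))
      (hx₁int.mono_set (hsubIoc i hi))
      measurableSet_Ioc hble
    rw [setIntegral_const, measureReal_def, hμi i hi, smul_eq_mul] at hmono
    rw [mul_comm]
    exact hmono
  -- telescoping
  have htel : ∑ i ∈ Finset.range n, (L (p (i+1)) - L (p i)) = L t := by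
    rw [Finset.sum_range_sub (fun i => L (p i)), hp0, hpn, hL0]
    ring
  have hSUSL : SU - SL = 2 * θ * L t := by
    rw [hSUdef, hSLdef, ← Finset.sum_sub_distrib]
    rw [show ∑ i ∈ Finset.range n, ((x₁ (p i) + θ) * (L (p (i+1)) - L (p i))
        - (x₁ (p i) - θ) * (L (p (i+1)) - L (p i)))
      = ∑ i ∈ Finset.range n, (2*θ) * (L (p (i+1)) - L (p i)) from
        Finset.sum_congr rfl fun i _ => by ring]
    rw [← Finset.mul_sum, htel]
  -- eventual bounds
  have hevU := (Metric.tendsto_nhds.mp hUlim) (η/8) (by positivity)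
  have hevLo := (Metric.tendsto_nhds.mp hLolim) (η/8) (by positivity)
  filter_upwards [hevU, hevLo, Ioo_mem_nhdsGT_of_mem
    (⟨le_refl (0:ℝ), by positivity⟩ : (0:ℝ) ∈ Ico (0:ℝ) (Real.pi/2))] with ε hUε hLoε hε
  have hε0 : 0 < ε := hε.1
  have htanpos : 0 < Real.tan ε := Real.tan_pos_of_pos_of_lt_pi_div_two hε.1 hε.2
  -- split f ε
  have hintφ : ∀ k < n, IntervalIntegrable
      (fun s => (Icc (-ε) ε).indicator (fun _ => (1:ℝ)) (Real.arctan (x₂ s / x₁ s)))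
      volume (p k) (p (k+1)) := by
    intro k hk
    apply intInt_ind' (hpmono k)
    exact hmφ.mono_measure (Measure.restrict_mono
      ((hsubIoc k hk).trans (Ioc_subset_Ioc le_rfl htT)) le_rfl)
  have hsplitf : (1 / (2 * ε)) * (∫ s in (0:ℝ)..t,
      (Icc (-ε) ε).indicator (fun _ => (1:ℝ)) (Real.arctan (x₂ s / x₁ s)))
      = ∑ i ∈ Finset.range n, (1 / (2 * ε)) * ∫ s in p i..p (i+1),
        (Icc (-ε) ε).indicator (fun _ => (1:ℝ)) (Real.arctan (x₂ s / x₁ s)) := by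
    rw [← Finset.mul_sum, intervalIntegral.sum_integral_adjacent_intervals hintφ, hp0, hpn]
  -- pointwise indicator comparisons
  have hcompare : ∀ i, i < n → ∀ s ∈ Icc (p i) (p (i+1)),
      ((Icc (-((x₁ (p i) - θ) * Real.tan ε)) ((x₁ (p i) - θ) * Real.tan ε)).indicator
        (fun _ => (1:ℝ)) (x₂ s) ≤
        (Icc (-ε) ε).indicator (fun _ => (1:ℝ)) (Real.arctan (x₂ s / x₁ s)))
      ∧ ((Icc (-ε) ε).indicator (fun _ => (1:ℝ)) (Real.arctan (x₂ s / x₁ s)) ≤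
        (Icc (-((x₁ (p i) + θ) * Real.tan ε)) ((x₁ (p i) + θ) * Real.tan ε)).indicator
          (fun _ => (1:ℝ)) (x₂ s)) := by
    intro i hi s hs
    have hsIcc := hpIcc i hi s hs
    have hx1s : 0 < x₁ s := hx₁pos s hsIcc
    have hcl : x₁ (p i) - θ ≤ x₁ s := by
      have := hclose i hi s hs; rw [abs_sub_lt_iff] at this; linarith [this.2]
    have hch : x₁ s ≤ x₁ (p i) + θ := by
      have := hclose i hi s hs; rw [abs_sub_lt_iff] at this; linarith [this.1]
    constructor
    · by_cases hmem : x₂ s ∈ Icc (-((x₁ (p i) - θ) * Real.tan ε)) ((x₁ (p i) - θ) * Real.tan ε)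
      · rw [indicator_of_mem hmem]
        have hmem2 : Real.arctan (x₂ s / x₁ s) ∈ Icc (-ε) ε := by
          rw [arctan_mem_iff' hε.1 hε.2, mem_Icc]
          rw [mem_Icc] at hmem
          have hmul : (x₁ (p i) - θ) * Real.tan ε ≤ x₁ s * Real.tan ε :=
            mul_le_mul_of_nonneg_right hcl htanpos.le
          constructor
          · rw [le_div_iff₀ hx1s]
            linarith [hmem.1, hmul]
          · rw [div_le_iff₀ hx1s]
            linarith [hmem.2, hmul]
        rw [indicator_of_mem hmem2]
      · rw [indicator_of_notMem hmem]
        exact indicator_nonneg (fun _ _ => zero_le_one) _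
    · by_cases hmem : Real.arctan (x₂ s / x₁ s) ∈ Icc (-ε) ε
      · rw [indicator_of_mem hmem]
        rw [arctan_mem_iff' hε.1 hε.2, mem_Icc] at hmem
        have hmem2 : x₂ s ∈ Icc (-((x₁ (p i) + θ) * Real.tan ε)) ((x₁ (p i) + θ) * Real.tan ε) := by
          rw [mem_Icc]
          have hd1 : -(Real.tan ε) * x₁ s ≤ x₂ s := by
            have h := hmem.1
            rw [le_div_iff₀ hx1s] at h
            linarith
          have hd2 : x₂ s ≤ Real.tan ε * x₁ s := by
            have h := hmem.2
            rw [div_le_iff₀ hx1s] at h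
            linarith
          have hmul : x₁ s * Real.tan ε ≤ (x₁ (p i) + θ) * Real.tan ε :=
            mul_le_mul_of_nonneg_right hch htanpos.le
          constructor
          · linarith [hd1, hmul]
          · linarith [hd2, hmul]
        rw [indicator_of_mem hmem2]
      · rw [indicator_of_notMem hmem]
        exact indicator_nonneg (fun _ _ => zero_le_one) _
  -- the squeeze
  have hintLo : ∀ i, i < n → IntervalIntegrable
      (fun s => (Icc (-((x₁ (p i) - θ) * Real.tan ε)) ((x₁ (p i) - θ) * Real.tan ε)).indicator
        (fun _ => (1:ℝ)) (x₂ s)) volume (p i) (p (i+1)) := by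
    intro i hi
    exact intInt_ind' (hpmono i) (hmx₂.mono_measure (Measure.restrict_mono
      ((hsubIoc i hi).trans (Ioc_subset_Ioc le_rfl htT)) le_rfl)) _ _
  have hintU : ∀ i, i < n → IntervalIntegrable
      (fun s => (Icc (-((x₁ (p i) + θ) * Real.tan ε)) ((x₁ (p i) + θ) * Real.tan ε)).indicator
        (fun _ => (1:ℝ)) (x₂ s)) volume (p i) (p (i+1)) := by
    intro i hi
    exact intInt_ind' (hpmono i) (hmx₂.mono_measure (Measure.restrict_mono
      ((hsubIoc i hi).trans (Ioc_subset_Ioc le_rfl htT)) le_rfl)) _ _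
  have hle1 : (1 / (2 * ε)) * (∫ s in (0:ℝ)..t,
      (Icc (-ε) ε).indicator (fun _ => (1:ℝ)) (Real.arctan (x₂ s / x₁ s)))
      ≤ ∑ i ∈ Finset.range n, (1 / (2 * ε)) * ∫ s in p i..p (i+1),
        (Icc (-((x₁ (p i) + θ) * Real.tan ε)) ((x₁ (p i) + θ) * Real.tan ε)).indicator
          (fun _ => (1:ℝ)) (x₂ s) := by
    rw [hsplitf]
    apply Finset.sum_le_sum
    intro i hi
    rw [Finset.mem_range] at hi
    apply mul_le_mul_of_nonneg_left ?_ (by positivity)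
    exact intervalIntegral.integral_mono_on (hpmono i) (hintφ i hi) (hintU i hi)
      (fun s hs => (hcompare i hi s hs).2)
  have hle2 : ∑ i ∈ Finset.range n, (1 / (2 * ε)) * (∫ s in p i..p (i+1),
      (Icc (-((x₁ (p i) - θ) * Real.tan ε)) ((x₁ (p i) - θ) * Real.tan ε)).indicator
        (fun _ => (1:ℝ)) (x₂ s))
      ≤ (1 / (2 * ε)) * (∫ s in (0:ℝ)..t,
        (Icc (-ε) ε).indicator (fun _ => (1:ℝ)) (Real.arctan (x₂ s / x₁ s))) := by
    rw [hsplitf]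
    apply Finset.sum_le_sum
    intro i hi
    rw [Finset.mem_range] at hi
    apply mul_le_mul_of_nonneg_left ?_ (by positivity)
    exact intervalIntegral.integral_mono_on (hpmono i) (hintLo i hi) (hintφ i hi)
      (fun s hs => (hcompare i hi s hs).1)
  -- conclude
  rw [Real.dist_eq] at hUε hLoε ⊢
  rw [abs_sub_lt_iff] at hUε hLoε ⊢
  constructor
  · linarith [hle1, hUε.1, hSUSL, hIge, hθLt, hη]
  · linarith [hle2, hLoε.2, hSUSL, hIle, hθLt, hη]
end

section
/- Let T > 0, let y : [0,T] → ℝ be continuous, and let ρ : [0,T] → ℝ be continuous with strictly positive values. Define A(t) = ∫₀ᵗ ρ(s) ds for t ∈ [0,T], and let A⁻¹ : [0, A(T)] → [0,T] be the inverse of the strictly increasing function A. Assume that for every t ∈ [0,T] the limit L(t) := lim_{ε→0+} (1/(2ε)) ∫₀ᵗ 1_{[−ε,ε]}(y(s)) ds exists and the resulting function L is continuous. Then for every t ∈ [0, A(T)], lim_{ε→0+} (1/(2ε)) ∫₀ᵗ 1_{[−ε,ε]}(y(A⁻¹(s))) ds = ∫₀^{A⁻¹(t)} ρ(s) dL(s);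 that is, the local time at level 0 of the time-changed path y ∘ A⁻¹ equals the Stieltjes integral of ρ against the local time of y, stopped at A⁻¹(t). -/
open MeasureTheory Filter Set
open intervalIntegral


theorem aux_step2
    (T : ℝ) (hT : 0 < T)
    (ρ : ℝ → ℝ) (hρ : ContinuousOn ρ (Icc 0 T))
    (L : ℝ → ℝ) (hLmono : MonotoneOn L (Icc 0 T)) (hL0 : L 0 = 0)
    (μ : Measure ℝ)
    (hμ : ∀ a b : ℝ, 0 ≤ a → a ≤ b → b ≤ T → μ (Ioc a b) = ENNReal.ofReal (L b - L a))
    (g : ℝ → ℝ → ℝ)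
    (hg01 : ∀ ε u, 0 ≤ g ε u ∧ g ε u ≤ 1)
    (hgint : ∀ ε, ∀ a b : ℝ, 0 ≤ a → a ≤ b → b ≤ T → IntervalIntegrable (g ε) volume a b)
    (hFlim : ∀ x ∈ Icc (0:ℝ) T, Tendsto (fun ε : ℝ => (1 / (2 * ε)) * ∫ s in (0:ℝ)..x, g ε s)
        (nhdsWithin 0 (Ioi 0)) (nhds (L x)))
    (τ : ℝ) (hτ0 : 0 ≤ τ) (hτT : τ ≤ T) :
    Tendsto (fun ε : ℝ => (1 / (2 * ε)) * ∫ s in (0:ℝ)..τ, ρ s * g ε s)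
      (nhdsWithin 0 (Ioi 0)) (nhds (∫ s in Ioc (0:ℝ) τ, ρ s ∂μ)) := by
  have hμfin : ∀ u v : ℝ, 0 ≤ u → u ≤ v → v ≤ T → μ (Ioc u v) < ⊤ := by
    intro u v h1 h2 h3; rw [hμ u v h1 h2 h3]; exact ENNReal.ofReal_lt_top
  have hρμ : ∀ u v : ℝ, 0 ≤ u → u ≤ v → v ≤ T → IntegrableOn ρ (Ioc u v) μ := by
    intro u v h1 h2 h3
    obtain ⟨C, hC⟩ := isCompact_Icc.exists_bound_of_continuousOn hρ
    have hmeas : AEStronglyMeasurable ρ (μ.restrict (Ioc u v)) :=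
      ((hρ.aemeasurable measurableSet_Icc).mono_measure
        (Measure.restrict_mono (Ioc_subset_Icc_self.trans (Icc_subset_Icc h1 h3))
          le_rfl)).aestronglyMeasurable
    refine Integrable.mono' (g := fun _ => C)
      ((integrableOn_const_iff).mpr (Or.inr (hμfin u v h1 h2 h3))) hmeas ?_
    exact (ae_restrict_iff' measurableSet_Ioc).2
      (ae_of_all _ fun x hx => hC x ⟨h1.trans hx.1.le, hx.2.trans h3⟩)
  rw [Metric.tendsto_nhds]
  intro δ hδ
  have hLτ0 : 0 ≤ L τ := by
    have := hLmono (left_mem_Icc.2 hT.le) ⟨hτ0, hτT⟩ hτ0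
    rwa [hL0] at this
  set B : ℝ := L τ + 1 with hBdef
  have hB0 : 0 < B := by linarith
  set δ' : ℝ := δ / (4 * B) with hδ'def
  have hδ' : 0 < δ' := by positivity
  obtain ⟨δ₀, hδ₀, hδ₀'⟩ := Metric.uniformContinuousOn_iff.1
    (isCompact_Icc.uniformContinuousOn_of_continuous hρ) δ' hδ'
  obtain ⟨n, hn⟩ := exists_nat_gt (τ / δ₀)
  have hnpos : (0:ℝ) < n := lt_of_le_of_lt (div_nonneg hτ0 hδ₀.le) hn
  set a : ℕ → ℝ := fun i => τ * i / n with hadef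
  have ha0 : a 0 = 0 := by simp [hadef]
  have han : a n = τ := by simp only [hadef]; rw [mul_div_assoc, div_self hnpos.ne', mul_one]
  have hamono : ∀ i j : ℕ, i ≤ j → a i ≤ a j := by
    intro i j hij
    have : (i:ℝ) ≤ j := Nat.cast_le.2 hij
    apply div_le_div_of_nonneg_right ?_ hnpos.le
    · exact mul_le_mul_of_nonneg_left this hτ0
  have hamem : ∀ i : ℕ, i ≤ n → a i ∈ Icc (0:ℝ) T := by
    intro i hi
    refine ⟨by positivity, ?_⟩
    calc a i ≤ a n := hamono i n hi
    _ = τ := han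
    _ ≤ T := hτT
  have hmesh : ∀ i : ℕ, a (i + 1) - a i < δ₀ := by
    intro i
    have h1 : a (i + 1) - a i = τ / n := by
      simp only [hadef]; push_cast; rw [← sub_div]; congr 1; ring
    rw [h1]
    rw [div_lt_iff₀ hnpos]
    rw [div_lt_iff₀ hδ₀] at hn
    linarith
  have hρclose : ∀ i : ℕ, i + 1 ≤ n → ∀ x ∈ Icc (a i) (a (i + 1)), |ρ x - ρ (a i)| ≤ δ' := by
    intro i hi x hx
    have hxm : x ∈ Icc (0:ℝ) T := by
      constructor
      · exact le_trans (hamem i (by omega)).1 hx.1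
      · exact le_trans hx.2 (hamem (i+1) hi).2
    have := hδ₀' x hxm (a i) (hamem i (by omega))
      (by rw [Real.dist_eq]
          rw [abs_of_nonneg (by linarith [hx.1])]
          linarith [hmesh i, hx.2])
    rw [Real.dist_eq] at this
    exact this.le
  set S : ℝ := ∑ i ∈ Finset.range n, ρ (a i) * (L (a (i + 1)) - L (a i)) with hSdef
  -- decompose the μ-integral along the partition
  have hIdecomp : ∀ m : ℕ, m ≤ n →
      (∫ s in Ioc (a 0) (a m), ρ s ∂μ) =
        ∑ i ∈ Finset.range m, ∫ s in Ioc (a i) (a (i + 1)), ρ s ∂μ := by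
    intro m hm
    induction m with
    | zero => simp
    | succ m ih =>
      have hm' : m ≤ n := by omega
      rw [← Ioc_union_Ioc_eq_Ioc (hamono 0 m (Nat.zero_le m)) (hamono m (m+1) (by omega)),
        setIntegral_union]
      · rw [ih hm', Finset.sum_range_succ]
      · exact Set.Ioc_disjoint_Ioc_of_le le_rfl
      · exact measurableSet_Ioc
      · rw [ha0]
        exact hρμ 0 (a m) le_rfl (hamem m hm').1 (hamem m hm').2
      · exact hρμ (a m) (a (m+1)) (hamem m hm').1 (hamono m (m+1) (by omega)) (hamem (m+1) hm).2
  -- per-piece estimate for the μ-integral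
  have hpiece : ∀ i : ℕ, i + 1 ≤ n →
      |(∫ s in Ioc (a i) (a (i + 1)), ρ s ∂μ) - ρ (a i) * (L (a (i + 1)) - L (a i))| ≤
        δ' * (L (a (i + 1)) - L (a i)) := by
    intro i hi
    have hi' : i ≤ n := by omega
    have hmem1 := hamem i hi'
    have hmem2 := hamem (i+1) hi
    have haa : a i ≤ a (i + 1) := hamono i (i+1) (by omega)
    have hLd : 0 ≤ L (a (i + 1)) - L (a i) := sub_nonneg.2 (hLmono hmem1 hmem2 haa)
    have hμval : (μ (Ioc (a i) (a (i + 1)))).toReal = L (a (i + 1)) - L (a i) := by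
      rw [hμ _ _ hmem1.1 haa hmem2.2, ENNReal.toReal_ofReal hLd]
    have hconst : (∫ _ in Ioc (a i) (a (i + 1)), ρ (a i) ∂μ) =
        ρ (a i) * (L (a (i + 1)) - L (a i)) := by
      rw [setIntegral_const, measureReal_def, hμval, smul_eq_mul, mul_comm]
    rw [← hconst, ← integral_sub (hρμ _ _ hmem1.1 haa hmem2.2)
      ((integrableOn_const_iff).mpr (Or.inr (hμfin _ _ hmem1.1 haa hmem2.2)))]
    have := MeasureTheory.norm_setIntegral_le_of_norm_le_const (μ := μ)
      (f := fun s => ρ s - ρ (a i)) (hμfin _ _ hmem1.1 haa hmem2.2)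
      (C := δ') ?_
    · rw [Real.norm_eq_abs] at this
      rw [measureReal_def, hμval] at this
      exact this
    · intro x hx
      rw [Real.norm_eq_abs]
      exact hρclose i hi x (Ioc_subset_Icc_self hx)
  -- total estimate for the μ-integral
  have hclaim2 : |(∫ s in Ioc (0:ℝ) τ, ρ s ∂μ) - S| ≤ δ' * L τ := by
    have h1 : (∫ s in Ioc (0:ℝ) τ, ρ s ∂μ) - S =
        ∑ i ∈ Finset.range n, ((∫ s in Ioc (a i) (a (i + 1)), ρ s ∂μ) -
          ρ (a i) * (L (a (i + 1)) - L (a i))) := by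
      rw [Finset.sum_sub_distrib, ← hIdecomp n le_rfl, ha0, han, hSdef]
    rw [h1]
    calc |∑ i ∈ Finset.range n, ((∫ s in Ioc (a i) (a (i + 1)), ρ s ∂μ) -
          ρ (a i) * (L (a (i + 1)) - L (a i)))|
        ≤ ∑ i ∈ Finset.range n, |(∫ s in Ioc (a i) (a (i + 1)), ρ s ∂μ) -
          ρ (a i) * (L (a (i + 1)) - L (a i))| := Finset.abs_sum_le_sum_abs _ _
      _ ≤ ∑ i ∈ Finset.range n, δ' * (L (a (i + 1)) - L (a i)) :=
          Finset.sum_le_sum fun i hi => hpiece i (Finset.mem_range.1 hi)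
      _ = δ' * (L (a n) - L (a 0)) := by
          rw [← Finset.mul_sum, Finset.sum_range_sub (fun i => L (a i))]
      _ = δ' * L τ := by rw [ha0, han, hL0, sub_zero]
  -- convergence of the Riemann sums in ε
  set Sf : ℝ → ℝ := fun ε => ∑ i ∈ Finset.range n,
    ρ (a i) * ((1 / (2 * ε)) * (∫ s in (0:ℝ)..(a (i+1)), g ε s) -
      (1 / (2 * ε)) * ∫ s in (0:ℝ)..(a i), g ε s) with hSfdef
  have hSflim : Tendsto Sf (nhdsWithin 0 (Ioi 0)) (nhds S) := by
    rw [hSfdef, hSdef]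
    apply tendsto_finset_sum
    intro i hi
    have hi' := Finset.mem_range.1 hi
    exact Tendsto.const_mul _ ((hFlim (a (i+1)) (hamem (i+1) hi')).sub
      (hFlim (a i) (hamem i (by omega))))
  have hev1 : ∀ᶠ ε : ℝ in nhdsWithin 0 (Ioi 0), ε ∈ Ioi (0:ℝ) :=
    eventually_mem_nhdsWithin
  have hev2 : ∀ᶠ ε : ℝ in nhdsWithin 0 (Ioi 0),
      dist ((1 / (2 * ε)) * ∫ s in (0:ℝ)..τ, g ε s) (L τ) < 1 :=
    Metric.tendsto_nhds.1 (hFlim τ ⟨hτ0, hτT⟩) 1 one_pos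
  have hev3 : ∀ᶠ ε : ℝ in nhdsWithin 0 (Ioi 0), dist (Sf ε) S < δ / 4 :=
    Metric.tendsto_nhds.1 hSflim (δ/4) (by positivity)
  filter_upwards [hev1, hev2, hev3] with ε hε hε2 hε3
  have hεpos : 0 < ε := hε
  have hc : 0 < 1 / (2 * ε) := by positivity
  -- interval integrability of the products
  have hρgint : ∀ i : ℕ, i + 1 ≤ n →
      IntervalIntegrable (fun s => ρ s * g ε s) volume (a i) (a (i+1)) := by
    intro i hi
    apply IntervalIntegrable.continuousOn_mul
      (hgint ε _ _ (hamem i (by omega)).1 (hamono i (i+1) (by omega)) (hamem (i+1) hi).2)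
    apply hρ.mono
    rw [uIcc_of_le (hamono i (i+1) (by omega))]
    exact Icc_subset_Icc (hamem i (by omega)).1 (hamem (i+1) hi).2
  -- claim 1: the weighted integral is close to the Riemann sum
  have hdecompε : (∫ s in (0:ℝ)..τ, ρ s * g ε s) =
      ∑ i ∈ Finset.range n, ∫ s in (a i)..(a (i+1)), ρ s * g ε s := by
    rw [sum_integral_adjacent_intervals (fun k hk => hρgint k hk), ha0, han]
  have hterm : ∀ i : ℕ, i + 1 ≤ n →
      ρ (a i) * ((1 / (2 * ε)) * (∫ s in (0:ℝ)..(a (i+1)), g ε s) -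
        (1 / (2 * ε)) * ∫ s in (0:ℝ)..(a i), g ε s) =
      (1 / (2 * ε)) * ∫ s in (a i)..(a (i+1)), ρ (a i) * g ε s := by
    intro i hi
    have hsub := integral_interval_sub_left
      (hgint ε 0 (a (i+1)) le_rfl (hamem (i+1) hi).1 (hamem (i+1) hi).2)
      (hgint ε 0 (a i) le_rfl (hamem i (by omega)).1 (hamem i (by omega)).2)
    rw [intervalIntegral.integral_const_mul, ← mul_sub, hsub]
    ring
  have hpieceε : ∀ i : ℕ, i + 1 ≤ n →
      |(1 / (2 * ε)) * (∫ s in (a i)..(a (i+1)), ρ s * g ε s) -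
        ρ (a i) * ((1 / (2 * ε)) * (∫ s in (0:ℝ)..(a (i+1)), g ε s) -
          (1 / (2 * ε)) * ∫ s in (0:ℝ)..(a i), g ε s)| ≤
      δ' * ((1 / (2 * ε)) * ∫ s in (a i)..(a (i+1)), g ε s) := by
    intro i hi
    have haa : a i ≤ a (i+1) := hamono i (i+1) (by omega)
    have hgi := hgint ε _ _ (hamem i (by omega)).1 haa (hamem (i+1) hi).2
    rw [hterm i hi, ← mul_sub, abs_mul, abs_of_pos hc]
    rw [← intervalIntegral.integral_sub (hρgint i hi) (hgi.const_mul _)]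
    have hbnd : |∫ s in (a i)..(a (i+1)), (ρ s * g ε s - ρ (a i) * g ε s)| ≤
        δ' * ∫ s in (a i)..(a (i+1)), g ε s := by
      have h1 : |∫ s in (a i)..(a (i+1)), (ρ s * g ε s - ρ (a i) * g ε s)| ≤
          |∫ s in (a i)..(a (i+1)), δ' * g ε s| := by
        rw [← Real.norm_eq_abs]
        apply intervalIntegral.norm_integral_le_abs_of_norm_le (g := fun s => δ' * g ε s)
          _ (hgi.const_mul δ')
        rw [uIoc_of_le haa]
        refine (ae_restrict_iff' measurableSet_Ioc).2 (ae_of_all _ fun x hx => ?_)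
        have hx' : x ∈ Icc (a i) (a (i+1)) := Ioc_subset_Icc_self hx
        rw [Real.norm_eq_abs, ← sub_mul, abs_mul, abs_of_nonneg (hg01 ε x).1]
        exact mul_le_mul_of_nonneg_right (hρclose i hi x hx') (hg01 ε x).1
      rw [intervalIntegral.integral_const_mul, abs_mul, abs_of_pos hδ',
        abs_of_nonneg (intervalIntegral.integral_nonneg haa fun u _ => (hg01 ε u).1)] at h1
      exact h1
    calc (1 / (2 * ε)) * |∫ s in (a i)..(a (i+1)), (ρ s * g ε s - ρ (a i) * g ε s)|
        ≤ (1 / (2 * ε)) * (δ' * ∫ s in (a i)..(a (i+1)), g ε s) :=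
          mul_le_mul_of_nonneg_left hbnd hc.le
      _ = δ' * ((1 / (2 * ε)) * ∫ s in (a i)..(a (i+1)), g ε s) := by ring
  have htel : ∑ i ∈ Finset.range n, ((1 / (2 * ε)) * ∫ s in (a i)..(a (i+1)), g ε s) =
      (1 / (2 * ε)) * ∫ s in (0:ℝ)..τ, g ε s := by
    rw [← Finset.mul_sum, sum_integral_adjacent_intervals (fun k hk =>
      hgint ε _ _ (hamem k (by omega)).1 (hamono k (k+1) (by omega)) (hamem (k+1) hk).2),
      ha0, han]
  have hclaim1 : |(1 / (2 * ε)) * (∫ s in (0:ℝ)..τ, ρ s * g ε s) - Sf ε| ≤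
      δ' * ((1 / (2 * ε)) * ∫ s in (0:ℝ)..τ, g ε s) := by
    rw [hdecompε, Finset.mul_sum, hSfdef, ← Finset.sum_sub_distrib]
    calc |∑ i ∈ Finset.range n, ((1 / (2 * ε)) * (∫ s in (a i)..(a (i+1)), ρ s * g ε s) -
          ρ (a i) * ((1 / (2 * ε)) * (∫ s in (0:ℝ)..(a (i+1)), g ε s) -
            (1 / (2 * ε)) * ∫ s in (0:ℝ)..(a i), g ε s))|
        ≤ ∑ i ∈ Finset.range n, |(1 / (2 * ε)) * (∫ s in (a i)..(a (i+1)), ρ s * g ε s) -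
          ρ (a i) * ((1 / (2 * ε)) * (∫ s in (0:ℝ)..(a (i+1)), g ε s) -
            (1 / (2 * ε)) * ∫ s in (0:ℝ)..(a i), g ε s)| := Finset.abs_sum_le_sum_abs _ _
      _ ≤ ∑ i ∈ Finset.range n, δ' * ((1 / (2 * ε)) * ∫ s in (a i)..(a (i+1)), g ε s) :=
          Finset.sum_le_sum fun i hi => hpieceε i (Finset.mem_range.1 hi)
      _ = δ' * ((1 / (2 * ε)) * ∫ s in (0:ℝ)..τ, g ε s) := by
          rw [← Finset.mul_sum, htel]
  -- final assembly
  have hFτB : (1 / (2 * ε)) * (∫ s in (0:ℝ)..τ, g ε s) ≤ B := by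
    rw [Real.dist_eq] at hε2
    have := abs_lt.1 hε2
    linarith [this.2]
  have hδ'B : δ' * B = δ / 4 := by
    rw [hδ'def]; field_simp
  rw [Real.dist_eq] at hε3 ⊢
  have e1 : |(1 / (2 * ε)) * (∫ s in (0:ℝ)..τ, ρ s * g ε s) - Sf ε| ≤ δ / 4 := by
    calc |(1 / (2 * ε)) * (∫ s in (0:ℝ)..τ, ρ s * g ε s) - Sf ε|
        ≤ δ' * ((1 / (2 * ε)) * ∫ s in (0:ℝ)..τ, g ε s) := hclaim1
      _ ≤ δ' * B := mul_le_mul_of_nonneg_left hFτB hδ'.le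
      _ = δ / 4 := hδ'B
  have e3 : |(∫ s in Ioc (0:ℝ) τ, ρ s ∂μ) - S| ≤ δ / 4 := by
    calc |(∫ s in Ioc (0:ℝ) τ, ρ s ∂μ) - S| ≤ δ' * L τ := hclaim2
      _ ≤ δ' * B := by nlinarith
      _ = δ / 4 := hδ'B
  calc |(1 / (2 * ε)) * (∫ s in (0:ℝ)..τ, ρ s * g ε s) - ∫ s in Ioc (0:ℝ) τ, ρ s ∂μ|
      ≤ |(1 / (2 * ε)) * (∫ s in (0:ℝ)..τ, ρ s * g ε s) - Sf ε| +
        |Sf ε - ∫ s in Ioc (0:ℝ) τ, ρ s ∂μ| := abs_sub_le _ _ _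
    _ ≤ |(1 / (2 * ε)) * (∫ s in (0:ℝ)..τ, ρ s * g ε s) - Sf ε| +
        (|Sf ε - S| + |S - ∫ s in Ioc (0:ℝ) τ, ρ s ∂μ|) := by
        gcongr
        exact abs_sub_le _ _ _
    _ < δ := by
        rw [abs_sub_comm S (∫ s in Ioc (0:ℝ) τ, ρ s ∂μ)]
        linarith


/-- Lemma 4 of the paper (deterministic form): if `y` has a local time `L` at level `0` on
`[0,T]` and `A(t) = ∫₀ᵗ ρ(s) ds` with `ρ` continuous and positive, then the time-changed
path `y ∘ A⁻¹` has a local time at level `0` given by `∫₀^{A⁻¹(t)} ρ(s) dL(s)`.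
The Stieltjes integral is encoded via a measure `μ` with `μ(Ioc a b) = L b - L a`
for `0 ≤ a ≤ b ≤ T`. -/
theorem local_time_time_change
    (T : ℝ) (hT : 0 < T)
    (y : ℝ → ℝ) (hy : ContinuousOn y (Icc 0 T))
    (ρ : ℝ → ℝ) (hρ : ContinuousOn ρ (Icc 0 T)) (hρpos : ∀ s ∈ Icc (0:ℝ) T, 0 < ρ s)
    (A : ℝ → ℝ) (hA : ∀ t, A t = ∫ s in (0:ℝ)..t, ρ s)
    (Ainv : ℝ → ℝ)
    (hAinvmem : ∀ t ∈ Icc (0:ℝ) (A T), Ainv t ∈ Icc (0:ℝ) T)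
    (hAinvright : ∀ t ∈ Icc (0:ℝ) (A T), A (Ainv t) = t)
    (hAinvleft : ∀ t ∈ Icc (0:ℝ) T, Ainv (A t) = t)
    (L : ℝ → ℝ)
    (hLlim : ∀ t ∈ Icc (0:ℝ) T,
      Tendsto (fun ε : ℝ =>
          (1 / (2 * ε)) * ∫ s in (0:ℝ)..t, (Icc (-ε) ε).indicator (fun _ => (1:ℝ)) (y s))
        (nhdsWithin 0 (Ioi 0)) (nhds (L t)))
    (hLmono : MonotoneOn L (Icc 0 T)) (hL0 : L 0 = 0)
    (hLcont : ContinuousOn L (Icc 0 T))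
    (μ : Measure ℝ)
    (hμ : ∀ a b : ℝ, 0 ≤ a → a ≤ b → b ≤ T → μ (Ioc a b) = ENNReal.ofReal (L b - L a)) :
    ∀ t ∈ Icc (0:ℝ) (A T),
      Tendsto (fun ε : ℝ =>
          (1 / (2 * ε)) *
            ∫ s in (0:ℝ)..t, (Icc (-ε) ε).indicator (fun _ => (1:ℝ)) (y (Ainv s)))
        (nhdsWithin 0 (Ioi 0)) (nhds (∫ s in Ioc (0:ℝ) (Ainv t), ρ s ∂μ)) := by
  intro t ht
  set g : ℝ → ℝ → ℝ := fun ε u => (Icc (-ε) ε).indicator (fun _ => (1:ℝ)) (y u) with hg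
  obtain ⟨ht0, htT⟩ := ht
  set τ : ℝ := Ainv t with hτdef
  have hτ : τ ∈ Icc (0:ℝ) T := hAinvmem t ⟨ht0, htT⟩
  have hAτ : A τ = t := hAinvright t ⟨ht0, htT⟩
  have hA0 : A 0 = 0 := by rw [hA]; simp
  have hg01 : ∀ ε u, 0 ≤ g ε u ∧ g ε u ≤ 1 := by
    intro ε u
    simp only [hg, Set.indicator]
    split <;> norm_num
  have hρint : ∀ a b : ℝ, 0 ≤ a → a ≤ b → b ≤ T → IntervalIntegrable ρ volume a b := by
    intro a b ha hab hb
    apply ContinuousOn.intervalIntegrable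
    apply hρ.mono
    rw [uIcc_of_le hab]
    exact Icc_subset_Icc ha hb
  have hgint : ∀ ε, ∀ a b : ℝ, 0 ≤ a → a ≤ b → b ≤ T → IntervalIntegrable (g ε) volume a b := by
    intro ε a b ha hab hb
    rw [intervalIntegrable_iff_integrableOn_Ioc_of_le hab]
    have hmeas : AEStronglyMeasurable (g ε) (volume.restrict (Ioc a b)) := by
      have hy' : AEMeasurable y (volume.restrict (Icc 0 T)) :=
        hy.aemeasurable measurableSet_Icc
      have : AEMeasurable y (volume.restrict (Ioc a b)) :=
        hy'.mono_measure (Measure.restrict_mono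
          (Ioc_subset_Icc_self.trans (Icc_subset_Icc ha hb)) le_rfl)
      exact ((measurable_const.indicator measurableSet_Icc).comp_aemeasurable
        this).aestronglyMeasurable
    refine Integrable.mono' (g := fun _ => (1:ℝ)) ?_ hmeas ?_
    · exact (integrableOn_const_iff).mpr (Or.inr measure_Ioc_lt_top)
    · refine ae_of_all _ fun u => ?_
      rw [Real.norm_eq_abs, abs_of_nonneg (hg01 ε u).1]
      exact (hg01 ε u).2
  have hAmono : StrictMonoOn A (Icc 0 T) := by
    intro u hu v hv huv
    have h1 : A v - A u = ∫ s in u..v, ρ s := by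
      rw [hA, hA]
      exact integral_interval_sub_left (hρint 0 v le_rfl hv.1 hv.2)
        (hρint 0 u le_rfl hu.1 hu.2)
    have h2 : 0 < ∫ s in u..v, ρ s := by
      apply intervalIntegral_pos_of_pos_on (hρint u v hu.1 huv.le hv.2) _ huv
      intro x hx
      exact hρpos x ⟨hu.1.trans hx.1.le, hx.2.le.trans hv.2⟩
    linarith
  have hAcont : ContinuousOn A (Icc 0 T) := by
    rw [funext hA]
    have := intervalIntegral.continuousOn_primitive_interval
      (a := (0:ℝ)) (b := T) (μ := volume) (f := ρ) ?_
    · rwa [uIcc_of_le hT.le] at this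
    · rw [uIcc_of_le hT.le]
      exact hρ.integrableOn_compact isCompact_Icc
  have key : ∀ ε : ℝ,
      (∫ s in (0:ℝ)..t, g ε (Ainv s)) = ∫ s in (0:ℝ)..τ, ρ s * g ε s := by
    intro ε
    have hsub : Icc (0:ℝ) τ ⊆ Icc 0 T := Icc_subset_Icc le_rfl hτ.2
    have hIm : A '' Ioo 0 τ = Ioo 0 t := by
      apply Subset.antisymm
      · rintro x ⟨u, hu, rfl⟩
        have hu' : u ∈ Icc (0:ℝ) T := hsub (Ioo_subset_Icc_self hu)
        constructor
        · rw [← hA0]; exact hAmono (left_mem_Icc.2 hT.le) hu' hu.1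
        · rw [← hAτ]; exact hAmono hu' hτ hu.2
      · have := intermediate_value_Ioo hτ.1 (hAcont.mono hsub)
        rwa [hA0, hAτ] at this
    have hderiv : ∀ x ∈ Ioo (0:ℝ) τ, HasDerivWithinAt A (ρ x) (Ioo 0 τ) x := by
      intro x hx
      have hxT : x ∈ Ioo (0:ℝ) T := ⟨hx.1, lt_of_lt_of_le hx.2 hτ.2⟩
      have hnhds : Icc (0:ℝ) T ∈ nhds x := Icc_mem_nhds hxT.1 hxT.2
      have hd : HasDerivAt (fun u => ∫ s in (0:ℝ)..u, ρ s) (ρ x) x := by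
        apply integral_hasDerivAt_right (hρint 0 x le_rfl hxT.1.le hxT.2.le)
        · exact ⟨Icc 0 T, hnhds, hρ.aestronglyMeasurable measurableSet_Icc⟩
        · exact hρ.continuousAt hnhds
      have : HasDerivAt A (ρ x) x := by rw [funext hA]; exact hd
      exact this.hasDerivWithinAt
    have hinj : InjOn A (Ioo 0 τ) :=
      (hAmono.injOn).mono ((Ioo_subset_Icc_self).trans hsub)
    have cov := integral_image_eq_integral_abs_deriv_smul measurableSet_Ioo hderiv hinj
      (fun s => g ε (Ainv s))
    rw [hIm] at cov
    rw [intervalIntegral.integral_of_le ht0, intervalIntegral.integral_of_le hτ.1,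
      integral_Ioc_eq_integral_Ioo, integral_Ioc_eq_integral_Ioo, cov]
    apply setIntegral_congr_fun measurableSet_Ioo
    intro x hx
    have hx' : x ∈ Icc (0:ℝ) T := hsub (Ioo_subset_Icc_self hx)
    simp only [smul_eq_mul, hAinvleft x hx', abs_of_pos (hρpos x hx')]
  have hfun : (fun ε : ℝ => (1 / (2 * ε)) * ∫ s in (0:ℝ)..t, g ε (Ainv s)) =
      fun ε : ℝ => (1 / (2 * ε)) * ∫ s in (0:ℝ)..τ, ρ s * g ε s :=
    funext fun ε => by rw [key ε]
  show Tendsto (fun ε : ℝ => (1 / (2 * ε)) * ∫ s in (0:ℝ)..t, g ε (Ainv s)) _ _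
  rw [hfun]
  exact aux_step2 T hT ρ hρ L hLmono hL0 μ hμ g hg01 hgint hLlim τ hτ.1 hτ.2
end

section
/- In the cyclic-chain setup, assume 0 < p_k < 1 for every k. Define r̃_k = p̃_k/q̃_k and S_k = Σ_{m=0}^{n−1} Π_{i=1}^{m} r̃_{k−i} (the empty product for m = 0 being 1, indices mod n). Then the vector π with π_k = (S_k/q̃_k) / (Σ_{j=1}^{n} S_j/q̃_j) is a stationary distribution of the cyclic chain: each π_k > 0, Σ_k π_k = 1, and π_k = π_{k−1} p̃_{k−1} + π_{k+1} q̃_{k+1} for every k (indices mod n). -/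
open Finset

private lemma prod_range_cast_zmod {n : ℕ} [NeZero n] (f : ZMod n → ℝ) :
    ∏ i ∈ Finset.range n, f (i : ZMod n) = ∏ j : ZMod n, f j := by
  refine Finset.prod_nbij' (fun i => (i : ZMod n)) (fun j => j.val) ?_ ?_ ?_ ?_ ?_
  · intro a ha; exact Finset.mem_univ _
  · intro b hb; exact Finset.mem_range.mpr (ZMod.val_lt b)
  · intro a ha; exact ZMod.val_cast_of_lt (Finset.mem_range.mp ha)
  · intro b hb; exact ZMod.natCast_rightInverse b
  · intro a ha; rfl

/-- Explicit stationary distribution of the cyclic chain (formula (14) of the paper),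
when `0 < p_k < 1` for all `k`. States are indexed by `ZMod n`. -/
theorem cyclic_chain_stationary_formula
    (n : ℕ) [NeZero n] (hn : 2 ≤ n)
    (ξ p : ZMod n → ℝ)
    (hξ : ∀ k, 0 < ξ k) (hp : ∀ k, 0 < p k ∧ p k < 1)
    (pt qt rt S π : ZMod n → ℝ)
    (hpt : ∀ k, pt k = p k * ξ (k - 1) / (p k * ξ (k - 1) + (1 - p k) * ξ k))
    (hqt : ∀ k, qt k = (1 - p k) * ξ k / (p k * ξ (k - 1) + (1 - p k) * ξ k))
    (hrt : ∀ k, rt k = pt k / qt k)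
    (hS : ∀ k, S k = ∑ m ∈ Finset.range n, ∏ i ∈ Finset.range m, rt (k - ((i : ZMod n) + 1)))
    (hπ : ∀ k, π k = (S k / qt k) / ∑ j ∈ Finset.range n, S (j : ZMod n) / qt (j : ZMod n)) :
    (∀ k, 0 < π k) ∧
    (∑ k ∈ Finset.range n, π (k : ZMod n)) = 1 ∧
    (∀ k : ZMod n, π k = π (k - 1) * pt (k - 1) + π (k + 1) * qt (k + 1)) := by
  have hD : ∀ k, 0 < p k * ξ (k - 1) + (1 - p k) * ξ k := by
    intro k
    have := hp k
    have := hξ k; have := hξ (k - 1)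
    nlinarith [hξ k, hξ (k-1)]
  have hptpos : ∀ k, 0 < pt k := by
    intro k; rw [hpt]
    exact div_pos (mul_pos (hp k).1 (hξ _)) (hD k)
  have hqtpos : ∀ k, 0 < qt k := by
    intro k; rw [hqt]
    exact div_pos (mul_pos (by linarith [(hp k).2]) (hξ _)) (hD k)
  have hsum1 : ∀ k, pt k + qt k = 1 := by
    intro k; rw [hpt, hqt, ← add_div, div_self (ne_of_gt (hD k))]
  have hrtpos : ∀ k, 0 < rt k := by
    intro k; rw [hrt]; exact div_pos (hptpos k) (hqtpos k)
  have hSpos : ∀ k, 0 < S k := by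
    intro k; rw [hS]
    apply Finset.sum_pos
    · intro m _
      exact Finset.prod_pos fun i _ => hrtpos _
    · exact Finset.nonempty_range_iff.mpr (by omega)
  have hTpos : 0 < ∑ j ∈ Finset.range n, S (j : ZMod n) / qt (j : ZMod n) := by
    apply Finset.sum_pos
    · intro j _; exact div_pos (hSpos _) (hqtpos _)
    · exact Finset.nonempty_range_iff.mpr (by omega)
  have hπpos : ∀ k, 0 < π k := by
    intro k; rw [hπ]
    exact div_pos (div_pos (hSpos k) (hqtpos k)) hTpos
  have hn1 : n - 1 + 1 = n := by omega
  -- key recurrence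
  have hrec : ∀ k : ZMod n, S (k + 1) =
      rt k * (S k - ∏ i ∈ Finset.range (n - 1), rt (k - ((i : ZMod n) + 1))) + 1 := by
    intro k
    rw [hS (k + 1), show Finset.range n = Finset.range (n - 1 + 1) by rw [hn1],
        Finset.sum_range_succ']
    have h0 : (∏ i ∈ Finset.range 0, rt (k + 1 - ((i : ZMod n) + 1))) = 1 :=
      Finset.prod_range_zero _
    rw [h0]
    have hterm : ∀ m, (∏ i ∈ Finset.range (m + 1), rt (k + 1 - ((i : ZMod n) + 1)))
        = rt k * ∏ i ∈ Finset.range m, rt (k - ((i : ZMod n) + 1)) := by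
      intro m
      rw [Finset.prod_range_succ']
      have : ∀ i : ℕ, rt (k + 1 - (((i + 1 : ℕ) : ZMod n) + 1))
          = rt (k - ((i : ZMod n) + 1)) := by
        intro i
        congr 1
        push_cast
        ring
      rw [Finset.prod_congr rfl fun i _ => this i]
      have h00 : rt (k + 1 - (((0 : ℕ) : ZMod n) + 1)) = rt k := by
        congr 1; push_cast; ring
      rw [h00, mul_comm]
    rw [Finset.sum_congr rfl fun m _ => hterm m, ← Finset.mul_sum]
    have hSk : S k = (∑ m ∈ Finset.range (n - 1), ∏ i ∈ Finset.range m,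
        rt (k - ((i : ZMod n) + 1))) + ∏ i ∈ Finset.range (n - 1), rt (k - ((i : ZMod n) + 1)) := by
      rw [hS k, show Finset.range n = Finset.range (n - 1 + 1) by rw [hn1],
          Finset.sum_range_succ]
    rw [eq_comm] at hSk
    linear_combination rt k * hSk
  -- the full product is independent of k
  have hP : ∀ k : ZMod n, rt k * ∏ i ∈ Finset.range (n - 1), rt (k - ((i : ZMod n) + 1))
      = ∏ j : ZMod n, rt j := by
    intro k
    have h1 : (∏ i ∈ Finset.range n, rt (k - (i : ZMod n)))
        = rt k * ∏ i ∈ Finset.range (n - 1), rt (k - ((i : ZMod n) + 1)) := by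
      rw [show Finset.range n = Finset.range (n - 1 + 1) by rw [hn1], Finset.prod_range_succ']
      have : ∀ i : ℕ, rt (k - ((i + 1 : ℕ) : ZMod n)) = rt (k - ((i : ZMod n) + 1)) := by
        intro i; congr 1; push_cast; ring
      rw [Finset.prod_congr rfl fun i _ => this i]
      have h00 : rt (k - ((0 : ℕ) : ZMod n)) = rt k := by congr 1; push_cast; ring
      rw [h00, mul_comm]
    rw [← h1, prod_range_cast_zmod (fun j => rt (k - j))]
    exact Equiv.prod_comp (Equiv.subLeft k) rt
  have hqtne : ∀ k, qt k ≠ 0 := fun k => ne_of_gt (hqtpos k)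
  have hdivqt : ∀ k, S k / qt k = S k * rt k + S k := by
    intro k
    rw [hrt k]
    have h := hsum1 k
    field_simp [hqtne k]
    linear_combination (-(S k)) * h
  refine ⟨hπpos, ?_, ?_⟩
  · rw [Finset.sum_congr rfl fun j _ => hπ ((j : ℕ) : ZMod n), ← Finset.sum_div,
      div_self (ne_of_gt hTpos)]
  · intro k
    have hkey : S k / qt k = (S (k - 1) / qt (k - 1)) * pt (k - 1)
        + (S (k + 1) / qt (k + 1)) * qt (k + 1) := by
      have e1 : S (k + 1) / qt (k + 1) * qt (k + 1) = S (k + 1) :=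
        div_mul_cancel₀ _ (hqtne _)
      have e2 : S (k - 1) / qt (k - 1) * pt (k - 1) = S (k - 1) * rt (k - 1) := by
        rw [hrt (k - 1)]
        field_simp
      rw [e1, e2, hdivqt k]
      have h1 := hrec k
      have h2 := hrec (k - 1)
      rw [sub_add_cancel] at h2
      have h3 : rt k * ∏ i ∈ Finset.range (n - 1), rt (k - ((i : ZMod n) + 1))
          = rt (k - 1) * ∏ i ∈ Finset.range (n - 1), rt (k - 1 - ((i : ZMod n) + 1)) := by
        rw [hP k, hP (k - 1)]
      linear_combination h2 - h1 + h3
    rw [hπ k, hπ (k - 1), hπ (k + 1), hkey]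
    ring
end

section
/- In the cyclic-chain setup, assume 0 < p_k < 1 for every k and that p₁·p₂·⋯·pₙ = q₁·q₂·⋯·qₙ. Then the vector π defined by π₁ = 1 / (1 + Σ_{k=2}^{n} (p̃₁ p̃₂ ⋯ p̃_{k−1})/(q̃₂ q̃₃ ⋯ q̃_k)) and π_k = π₁ · (p̃₁ p̃₂ ⋯ p̃_{k−1})/(q̃₂ q̃₃ ⋯ q̃_k) for k = 2,…,n is a stationary distribution of the cyclic chain. -/
open Finset

lemma zmod_prod_range (n : ℕ) [NeZero n] (f : ZMod n → ℝ) :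
    ∏ i ∈ Finset.range n, f (i : ZMod n) = ∏ k : ZMod n, f k := by
  refine Finset.prod_nbij (fun i => (i : ZMod n)) (fun a _ => Finset.mem_univ _)
    ?_ ?_ (fun a _ => rfl)
  · intro a ha b hb h
    simp only [Finset.coe_range, Set.mem_Iio] at ha hb
    have := congrArg ZMod.val h
    rwa [ZMod.val_cast_of_lt ha, ZMod.val_cast_of_lt hb] at this
  · intro k _
    exact ⟨k.val, by simpa using k.val_lt, ZMod.natCast_rightInverse k⟩

lemma zmod_sum_range (n : ℕ) [NeZero n] (f : ZMod n → ℝ) :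
    ∑ i ∈ Finset.range n, f (i : ZMod n) = ∑ k : ZMod n, f k := by
  refine Finset.sum_nbij (fun i => (i : ZMod n)) (fun a _ => Finset.mem_univ _)
    ?_ ?_ (fun a _ => rfl)
  · intro a ha b hb h
    simp only [Finset.coe_range, Set.mem_Iio] at ha hb
    have := congrArg ZMod.val h
    rwa [ZMod.val_cast_of_lt ha, ZMod.val_cast_of_lt hb] at this
  · intro k _
    exact ⟨k.val, by simpa using k.val_lt, ZMod.natCast_rightInverse k⟩

lemma zmod_prod_Icc (n : ℕ) [NeZero n] (f : ZMod n → ℝ) :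
    ∏ i ∈ Finset.Icc 1 n, f (i : ZMod n) = ∏ k : ZMod n, f k := by
  have h1 : ∏ i ∈ Finset.Icc 1 n, f (i : ZMod n)
      = ∏ i ∈ Finset.range n, f ((i : ZMod n) + 1) := by
    rw [← Finset.Ico_add_one_right_eq_Icc, Finset.prod_Ico_eq_prod_range]
    refine Finset.prod_congr rfl fun i _ => ?_
    push_cast
    ring_nf
  rw [h1, zmod_prod_range n (fun k => f (k + 1))]
  exact Equiv.prod_comp (Equiv.addRight (1 : ZMod n)) f

lemma zmod_sum_Icc (n : ℕ) [NeZero n] (f : ZMod n → ℝ) :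
    ∑ i ∈ Finset.Icc 1 n, f (i : ZMod n) = ∑ k : ZMod n, f k := by
  have h1 : ∑ i ∈ Finset.Icc 1 n, f (i : ZMod n)
      = ∑ i ∈ Finset.range n, f ((i : ZMod n) + 1) := by
    rw [← Finset.Ico_add_one_right_eq_Icc, Finset.sum_Ico_eq_sum_range]
    refine Finset.sum_congr rfl fun i _ => ?_
    push_cast
    ring_nf
  rw [h1, zmod_sum_range n (fun k => f (k + 1))]
  exact Equiv.sum_comp (Equiv.addRight (1 : ZMod n)) f

/-- Explicit stationary distribution of the cyclic chain (formula (15) of the paper),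
in the case `p₁⋯pₙ = q₁⋯qₙ` with `0 < p_k < 1` for all `k`.
States are indexed by `ZMod n`, the paper's state `k ∈ {1,…,n}` corresponding to the
residue `k mod n`. -/
theorem cyclic_chain_stationary_formula_balanced
    (n : ℕ) [NeZero n] (hn : 2 ≤ n)
    (ξ p : ZMod n → ℝ)
    (hξ : ∀ k, 0 < ξ k) (hp : ∀ k, 0 < p k ∧ p k < 1)
    (hbal : (∏ k ∈ Finset.range n, p (k : ZMod n)) =
      ∏ k ∈ Finset.range n, (1 - p (k : ZMod n)))
    (pt qt π : ZMod n → ℝ)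
    (hpt : ∀ k, pt k = p k * ξ (k - 1) / (p k * ξ (k - 1) + (1 - p k) * ξ k))
    (hqt : ∀ k, qt k = (1 - p k) * ξ k / (p k * ξ (k - 1) + (1 - p k) * ξ k))
    (hπ1 : π 1 = 1 / (1 + ∑ k ∈ Finset.Icc 2 n,
      (∏ j ∈ Finset.Icc 1 (k - 1), pt (j : ZMod n)) /
        (∏ j ∈ Finset.Icc 2 k, qt (j : ZMod n))))
    (hπk : ∀ k ∈ Finset.Icc 2 n, π (k : ZMod n) = π 1 *
      ((∏ j ∈ Finset.Icc 1 (k - 1), pt (j : ZMod n)) /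
        (∏ j ∈ Finset.Icc 2 k, qt (j : ZMod n)))) :
    (∀ k, 0 ≤ π k) ∧
    (∑ k ∈ Finset.range n, π (k : ZMod n)) = 1 ∧
    (∀ k : ZMod n, π k = π (k - 1) * pt (k - 1) + π (k + 1) * qt (k + 1)) := by
  have hq : ∀ k : ZMod n, 0 < 1 - p k := fun k => by linarith [(hp k).2]
  have hD : ∀ k : ZMod n, 0 < p k * ξ (k - 1) + (1 - p k) * ξ k := fun k => by
    have h1 := (hp k).1; have h2 := hq k; have h3 := hξ (k - 1); have h4 := hξ k
    positivity
  have hptpos : ∀ k, 0 < pt k := fun k => by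
    rw [hpt]; exact div_pos (mul_pos (hp k).1 (hξ _)) (hD k)
  have hqtpos : ∀ k, 0 < qt k := fun k => by
    rw [hqt]; exact div_pos (mul_pos (hq k) (hξ _)) (hD k)
  have hsum1 : ∀ k, pt k + qt k = 1 := fun k => by
    rw [hpt, hqt, ← add_div, div_self (hD k).ne']
  set R : ℕ → ℝ := fun k => (∏ j ∈ Finset.Icc 1 (k - 1), pt (j : ZMod n)) /
        (∏ j ∈ Finset.Icc 2 k, qt (j : ZMod n)) with hR
  have hRpos : ∀ k, 0 < R k := fun k =>
    div_pos (Finset.prod_pos fun j _ => hptpos _) (Finset.prod_pos fun j _ => hqtpos _)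
  have hR1 : R 1 = 1 := by simp [hR]
  have hπm : ∀ m ∈ Finset.Icc 1 n, π (m : ZMod n) = π 1 * R m := by
    intro m hm
    rcases eq_or_lt_of_le (Finset.mem_Icc.1 hm).1 with h | h
    · rw [← h]; simp [hR1]
    · exact hπk m (Finset.mem_Icc.2 ⟨h, (Finset.mem_Icc.1 hm).2⟩)
  have hIoc : Finset.Ioc 1 n = Finset.Icc 2 n := by
    rw [← Finset.Icc_add_one_left_eq_Ioc]; rfl
  set S : ℝ := ∑ m ∈ Finset.Icc 1 n, R m with hS
  have hScons : S = 1 + ∑ m ∈ Finset.Icc 2 n, R m := by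
    rw [hS, Finset.Icc_eq_cons_Ioc (by omega : 1 ≤ n), Finset.sum_cons, hIoc, hR1]
  have hSpos : 0 < S :=
    Finset.sum_pos (fun m _ => hRpos m) ⟨1, Finset.mem_Icc.2 ⟨le_rfl, by omega⟩⟩
  have hπ1S : π 1 = 1 / S := by rw [hπ1, hScons]
  have hπ1pos : 0 < π 1 := by rw [hπ1S]; positivity
  have hrep : ∀ k : ZMod n, ∃ m, m ∈ Finset.Icc 1 n ∧ (m : ZMod n) = k := by
    intro k
    by_cases h : k = 0
    · exact ⟨n, Finset.mem_Icc.2 ⟨by omega, le_rfl⟩, by simp [h]⟩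
    · refine ⟨k.val, Finset.mem_Icc.2 ⟨?_, (ZMod.val_lt k).le⟩, ZMod.natCast_rightInverse k⟩
      have hv : k.val ≠ 0 := fun hv => h ((ZMod.val_eq_zero k).1 hv)
      omega
  -- key product identity
  have hptD : ∀ k : ZMod n, pt k * (p k * ξ (k - 1) + (1 - p k) * ξ k) = p k * ξ (k - 1) :=
    fun k => by rw [hpt]; exact div_mul_cancel₀ _ (hD k).ne'
  have hqtD : ∀ k : ZMod n, qt k * (p k * ξ (k - 1) + (1 - p k) * ξ k) = (1 - p k) * ξ k :=
    fun k => by rw [hqt]; exact div_mul_cancel₀ _ (hD k).ne'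
  have hbal' : (∏ k : ZMod n, p k) = ∏ k : ZMod n, (1 - p k) := by
    rw [← zmod_prod_range n p, ← zmod_prod_range n (fun k => 1 - p k)]; exact hbal
  have hkey : (∏ k : ZMod n, pt k) = ∏ k : ZMod n, qt k := by
    have hDne : (∏ k : ZMod n, (p k * ξ (k - 1) + (1 - p k) * ξ k)) ≠ 0 :=
      ne_of_gt (Finset.prod_pos fun k _ => hD k)
    refine mul_right_cancel₀ hDne ?_
    rw [← Finset.prod_mul_distrib, ← Finset.prod_mul_distrib]
    calc (∏ k : ZMod n, pt k * (p k * ξ (k - 1) + (1 - p k) * ξ k))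
        = ∏ k : ZMod n, p k * ξ (k - 1) := by
          exact Finset.prod_congr rfl fun k _ => hptD k
      _ = (∏ k : ZMod n, p k) * ∏ k : ZMod n, ξ (k - 1) := Finset.prod_mul_distrib
      _ = (∏ k : ZMod n, (1 - p k)) * ∏ k : ZMod n, ξ k := by
          rw [hbal']
          congr 1
          exact Equiv.prod_comp (Equiv.subRight (1 : ZMod n)) ξ
      _ = ∏ k : ZMod n, (1 - p k) * ξ k := Finset.prod_mul_distrib.symm
      _ = ∏ k : ZMod n, qt k * (p k * ξ (k - 1) + (1 - p k) * ξ k) :=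
          (Finset.prod_congr rfl fun k _ => (hqtD k)).symm
  have hkeyIcc : (∏ j ∈ Finset.Icc 1 n, pt (j : ZMod n))
      = ∏ j ∈ Finset.Icc 1 n, qt (j : ZMod n) := by
    rw [zmod_prod_Icc, zmod_prod_Icc, hkey]
  have halg : ∀ a X Y u v : ℝ, Y ≠ 0 → v ≠ 0 →
      a * (X / Y) * u = a * (X * u / (Y * v)) * v := by
    intro a X Y u v hY hv
    field_simp
  -- detailed balance
  have hdbm : ∀ m, 1 ≤ m → m ≤ n →
      π (m : ZMod n) * pt (m : ZMod n) = π ((m : ZMod n) + 1) * qt ((m : ZMod n) + 1) := by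
    intro m h1 h2
    rcases lt_or_eq_of_le h2 with hlt | heq
    · have hcast : ((m + 1 : ℕ) : ZMod n) = (m : ZMod n) + 1 := by push_cast; ring
      have hπm1 := hπm (m + 1) (Finset.mem_Icc.2 ⟨by omega, by omega⟩)
      rw [hcast] at hπm1
      rw [hπm m (Finset.mem_Icc.2 ⟨h1, h2⟩), hπm1]
      obtain ⟨m', rfl⟩ : ∃ m', m = m' + 1 := ⟨m - 1, by omega⟩
      simp only [hR, Nat.add_sub_cancel]
      rw [Finset.prod_Icc_succ_top (by omega : 1 ≤ m' + 1),
        Finset.prod_Icc_succ_top (by omega : 2 ≤ m' + 1 + 1)]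
      have hq1 : (∏ j ∈ Finset.Icc 2 (m' + 1), qt (j : ZMod n)) ≠ 0 :=
        ne_of_gt (Finset.prod_pos fun j _ => hqtpos _)
      have hc2 : ((m' + 1 + 1 : ℕ) : ZMod n) = ((m' + 1 : ℕ) : ZMod n) + 1 := by
        push_cast; ring
      rw [hc2]
      exact halg _ _ _ _ _ hq1 (ne_of_gt (hqtpos _))
    · have hc0 : ((m : ℕ) : ZMod n) = 0 := by rw [heq]; exact ZMod.natCast_self n
      rw [hπm m (Finset.mem_Icc.2 ⟨h1, h2⟩),
        show ((m : ZMod n) + 1) = 1 by rw [hc0, zero_add], mul_assoc]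
      congr 1
      have hsplit : (∏ j ∈ Finset.Icc 1 m, pt (j : ZMod n))
          = (∏ j ∈ Finset.Icc 1 (m - 1), pt (j : ZMod n)) * pt ((m : ℕ) : ZMod n) := by
        obtain ⟨m'', rfl⟩ : ∃ a, m = a + 1 := ⟨m - 1, by omega⟩
        rw [Finset.prod_Icc_succ_top (by omega : 1 ≤ m'' + 1), Nat.add_sub_cancel]
      have hqsplit : (∏ j ∈ Finset.Icc 1 n, qt (j : ZMod n))
          = qt (((1 : ℕ) : ZMod n)) * ∏ j ∈ Finset.Icc 2 n, qt (j : ZMod n) := by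
        rw [Finset.Icc_eq_cons_Ioc (by omega : 1 ≤ n), Finset.prod_cons, hIoc]
      have hq2 : (∏ j ∈ Finset.Icc 2 n, qt (j : ZMod n)) ≠ 0 :=
        ne_of_gt (Finset.prod_pos fun j _ => hqtpos _)
      have : R m * pt ((m : ℕ) : ZMod n)
          = (∏ j ∈ Finset.Icc 1 m, pt (j : ZMod n)) / ∏ j ∈ Finset.Icc 2 m, qt (j : ZMod n) := by
        simp only [hR]
        rw [hsplit, div_mul_eq_mul_div]
      rw [this, heq, hkeyIcc, hqsplit, mul_div_assoc, div_self hq2, mul_one, Nat.cast_one]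
  have hdb : ∀ k : ZMod n, π k * pt k = π (k + 1) * qt (k + 1) := by
    intro k
    obtain ⟨m, hm, rfl⟩ := hrep k
    exact hdbm m (Finset.mem_Icc.1 hm).1 (Finset.mem_Icc.1 hm).2
  refine ⟨?_, ?_, ?_⟩
  · intro k
    obtain ⟨m, hm, rfl⟩ := hrep k
    rw [hπm m hm]
    exact le_of_lt (mul_pos hπ1pos (hRpos m))
  · rw [zmod_sum_range n (fun k => π k), ← zmod_sum_Icc n (fun k => π k),
      Finset.sum_congr rfl hπm, ← Finset.mul_sum, hπ1S, ← hS, one_div,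
      inv_mul_cancel₀ hSpos.ne']
  · intro k
    have h1 := hdb (k - 1)
    rw [sub_add_cancel] at h1
    have h2 := hdb k
    have h3 : π k * pt k + π k * qt k = π k := by rw [← mul_add, hsum1 k, mul_one]
    linarith
end

section
/- In the cyclic-chain setup, assume 0 < p̃_k < 1 for every k and set r̃_k = p̃_k/q̃_k. Let π₁,…,πₙ be real numbers satisfying π_k = π_{k−1} p̃_{k−1} + π_{k+1} q̃_{k+1} for every k = 1,…,n with indices taken cyclically mod n, and set C := π₂ q̃₂ − π₁ p̃₁. If r̃₁ r̃₂ ⋯ r̃ₙ ≠ 1, then π₁ = C · (1 + r̃ₙ + r̃_{n−1} r̃ₙ + r̃_{n−2} r̃_{n−1} r̃ₙ + ⋯ + r̃₂ r̃₃ ⋯ r̃ₙ) / (q̃₁ (1 − r̃₁ r̃₂ ⋯ r̃ₙ)). -/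
open Finset

/-- The explicit formula for `π₁` in the cyclic chain when `r̃₁⋯r̃ₙ ≠ 1` (the formula for
`π₁` preceding (21) in the paper). States are indexed by `ZMod n`, the paper's index
`k ∈ {1,…,n}` corresponding to the residue `k mod n`. -/
theorem cyclic_chain_pi_one_formula
    (n : ℕ) [NeZero n] (hn : 2 ≤ n)
    (ξ p : ZMod n → ℝ)
    (hξ : ∀ k, 0 < ξ k) (hp : ∀ k, 0 ≤ p k ∧ p k ≤ 1)
    (pt qt rt : ZMod n → ℝ)
    (hpt : ∀ k, pt k = p k * ξ (k - 1) / (p k * ξ (k - 1) + (1 - p k) * ξ k))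
    (hqt : ∀ k, qt k = (1 - p k) * ξ k / (p k * ξ (k - 1) + (1 - p k) * ξ k))
    (hpt01 : ∀ k, 0 < pt k ∧ pt k < 1)
    (hrt : ∀ k, rt k = pt k / qt k)
    (π : ZMod n → ℝ)
    (hπstat : ∀ k : ZMod n, π k = π (k - 1) * pt (k - 1) + π (k + 1) * qt (k + 1))
    (C : ℝ) (hC : C = π 2 * qt 2 - π 1 * pt 1)
    (hprod : (∏ k ∈ Finset.range n, rt (k : ZMod n)) ≠ 1) :
    π 1 = C * (∑ m ∈ Finset.range n, ∏ i ∈ Finset.range m, rt (((n - i : ℕ) : ZMod n))) /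
      (qt 1 * (1 - ∏ k ∈ Finset.range n, rt (k : ZMod n))) := by
  -- positivity of the denominator in the definitions of pt, qt
  have hden : ∀ k : ZMod n, 0 < p k * ξ (k - 1) + (1 - p k) * ξ k := by
    intro k
    rcases eq_or_lt_of_le (hp k).1 with h | h
    · rw [← h]; simpa using hξ k
    · have h1 : 0 ≤ (1 - p k) * ξ k := mul_nonneg (by linarith [(hp k).2]) (hξ k).le
      have h2 : 0 < p k * ξ (k - 1) := mul_pos h (hξ (k - 1))
      linarith
  have hsum1 : ∀ k, pt k + qt k = 1 := by
    intro k
    rw [hpt, hqt, ← add_div, div_self (hden k).ne']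
  have hqt0 : ∀ k, 0 < qt k := by
    intro k; have h1 := (hpt01 k).2; have h2 := hsum1 k; linarith
  have hrt0 : ∀ k, rt k ≠ 0 := by
    intro k; rw [hrt]; exact div_ne_zero (hpt01 k).1.ne' (hqt0 k).ne'
  have hptr : ∀ k, pt k = rt k * qt k := by
    intro k; rw [hrt, div_mul_cancel₀ _ (hqt0 k).ne']
  -- the flux is constant
  set J : ZMod n → ℝ := fun k => π (k + 1) * qt (k + 1) - π k * pt k with hJ
  have Jsucc : ∀ k, J (k + 1) = J k := by
    intro k
    have h1 := hπstat (k + 1)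
    have h2 : (k + 1) - 1 = k := by ring
    rw [h2] at h1
    have h3 := hsum1 (k + 1)
    simp only [hJ]
    linear_combination -h1 - π (k + 1) * h3
  have Jcast : ∀ m : ℕ, J (m : ZMod n) = J 0 := by
    intro m
    induction m with
    | zero => simp
    | succ m ih => push_cast; rw [Jsucc]; exact ih
  have JC : ∀ k, J k = C := by
    intro k
    have h0 : J k = J 0 := by
      have := Jcast k.val; rwa [ZMod.natCast_rightInverse k] at this
    have h1 : J 1 = J 0 := by
      have := Jcast 1; rwa [Nat.cast_one] at this
    have h2 : J 1 = C := by
      simp only [hJ]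
      rw [hC]
      norm_num
    rw [h0, ← h1, h2]
  have hrec : ∀ k, π (k + 1) * qt (k + 1) = rt k * (π k * qt k) + C := by
    intro k
    have h := JC k
    simp only [hJ] at h
    linear_combination h + π k * hptr k
  -- the geometric-sum function
  set Tm : ℕ → ℝ := fun m => ∑ j ∈ range m, ∏ i ∈ range j, rt (((m - i : ℕ) : ZMod n))
    with hTm
  have hT : ∀ m : ℕ, Tm (m + 1) = rt (((m + 1 : ℕ) : ZMod n)) * Tm m + 1 := by
    intro m
    simp only [hTm]
    rw [Finset.sum_range_succ']
    have h1 : ∀ j ∈ range m, (∏ i ∈ range (j + 1), rt (((m + 1 - i : ℕ) : ZMod n)))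
        = (∏ i ∈ range j, rt (((m - i : ℕ) : ZMod n))) * rt (((m + 1 : ℕ) : ZMod n)) := by
      intro j _
      rw [Finset.prod_range_succ', Nat.sub_zero]
      congr 1
      all_goals try rfl
      all_goals (apply Finset.prod_congr rfl; intro i _; congr 2; omega)
    rw [Finset.sum_congr rfl h1, ← Finset.sum_mul]
    simp [mul_comm]
  -- the main induction
  have key : ∀ m : ℕ, π (((1 + m : ℕ) : ZMod n)) * qt (((1 + m : ℕ) : ZMod n)) =
      (∏ k ∈ range m, rt (((1 + k : ℕ) : ZMod n))) * (π 1 * qt 1) + C * Tm m := by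
    intro m
    induction m with
    | zero => simp [hTm]
    | succ m ih =>
      have hc : ((1 + (m + 1) : ℕ) : ZMod n) = ((1 + m : ℕ) : ZMod n) + 1 := by
        push_cast; ring
      have hc2 : ((m + 1 : ℕ) : ZMod n) = ((1 + m : ℕ) : ZMod n) := by
        push_cast; ring
      rw [hc, hrec (((1 + m : ℕ) : ZMod n)), ih, Finset.prod_range_succ, hT, hc2]
      ring
  -- evaluate at m = n
  have hcyc : ((1 + n : ℕ) : ZMod n) = 1 := by
    push_cast; simp [ZMod.natCast_self]
  have hP : (∏ k ∈ range n, rt (((1 + k : ℕ) : ZMod n))) = ∏ k ∈ range n, rt (k : ZMod n) := by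
    have e1 : (∏ k ∈ range (n + 1), rt (k : ZMod n))
        = (∏ k ∈ range n, rt (k : ZMod n)) * rt ((n : ZMod n)) := Finset.prod_range_succ _ _
    have e2 : (∏ k ∈ range (n + 1), rt ((k : ZMod n)))
        = (∏ k ∈ range n, rt (((k + 1 : ℕ) : ZMod n))) * rt ((0 : ℕ) : ZMod n) :=
      Finset.prod_range_succ' _ _
    have e3 : ((n : ℕ) : ZMod n) = ((0 : ℕ) : ZMod n) := by simp [ZMod.natCast_self]
    have e4 : (∏ k ∈ range n, rt (((k + 1 : ℕ) : ZMod n)))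
        = ∏ k ∈ range n, rt (((1 + k : ℕ) : ZMod n)) := by
      apply Finset.prod_congr rfl; intro k _; congr 2; omega
    have e5 := e1.symm.trans e2
    rw [e3, e4] at e5
    exact (mul_right_cancel₀ (by simpa using hrt0 ((0 : ℕ) : ZMod n)) e5).symm
  have hkeyn := key n
  rw [hcyc, hP] at hkeyn
  -- solve the linear equation
  set R := ∏ k ∈ range n, rt (k : ZMod n) with hR
  have hR1 : (1 : ℝ) - R ≠ 0 := sub_ne_zero_of_ne (Ne.symm hprod)
  have hq1 : qt 1 ≠ 0 := (hqt0 1).ne'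
  have hgoal : π 1 * (qt 1 * (1 - R)) = C * Tm n := by
    linear_combination hkeyn
  rw [eq_div_iff (mul_ne_zero hq1 hR1)]
  simp only [hTm] at hgoal
  linarith [hgoal]
end

section
/- In the cyclic-chain setup, assume 0 < p_k < 1 for every k and that p₁⋯pₙ ≠ q₁⋯qₙ. Let π = (π₁,…,πₙ) be the unique stationary distribution of the cyclic chain, set M_k = ξ_{k−1} ξ_k/(p_k ξ_{k−1} + q_k ξ_k) and r_k = p_k/q_k, and let t₁,…,tₙ be arbitrary real numbers. Then Σ_{k=1}^{n} (p_k − q_k) π_k M_k t_k > 0 if and only if Σ_{k=1}^{n} ξ_k Σ_{j=1}^{n} r_{k+1} r_{k+2} ⋯ r_{k+j−1} (r_{k+j} − 1) t_{k+j} > 0 (indices mod n; the inner product over an empty range is 1). -/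
open Finset

private lemma sum_range_zmod {n : ℕ} [NeZero n] (f : ZMod n → ℝ) :
    ∑ k ∈ Finset.range n, f (k : ZMod n) = ∑ x : ZMod n, f x := by
  refine Finset.sum_nbij' (fun k => (k : ZMod n)) (fun x => x.val) ?_ ?_ ?_ ?_ ?_
  · intro a _; exact Finset.mem_univ _
  · intro a _; exact Finset.mem_range.2 (ZMod.val_lt a)
  · intro a ha; exact ZMod.val_cast_of_lt (Finset.mem_range.1 ha)
  · intro a _; exact ZMod.natCast_rightInverse a
  · intro a _; rfl

private lemma prod_range_zmod {n : ℕ} [NeZero n] (f : ZMod n → ℝ) :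
    ∏ k ∈ Finset.range n, f (k : ZMod n) = ∏ x : ZMod n, f x := by
  refine Finset.prod_nbij' (fun k => (k : ZMod n)) (fun x => x.val) ?_ ?_ ?_ ?_ ?_
  · intro a _; exact Finset.mem_univ _
  · intro a _; exact Finset.mem_range.2 (ZMod.val_lt a)
  · intro a ha; exact ZMod.val_cast_of_lt (Finset.mem_range.1 ha)
  · intro a _; exact ZMod.natCast_rightInverse a
  · intro a _; rfl

private lemma zmod_const {n : ℕ} [NeZero n] (g : ZMod n → ℝ) (h : ∀ k, g k = g (k - 1)) :
    ∀ k, g k = g 0 := by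
  have key : ∀ m : ℕ, g (m : ZMod n) = g 0 := by
    intro m
    induction m with
    | zero => simp
    | succ m ih =>
      have : ((m + 1 : ℕ) : ZMod n) - 1 = (m : ZMod n) := by push_cast; ring
      rw [h ((m + 1 : ℕ) : ZMod n), this, ih]
  intro k
  have : ((k.val : ℕ) : ZMod n) = k := ZMod.natCast_rightInverse k
  rw [← this, key]

/-- Remark 3 of the paper: when `0 < p_k < 1` and `p₁⋯pₙ ≠ q₁⋯qₙ`, the sign criterion
`Σ_k (p_k − q_k) π_k M_k t_k > 0` (with `π` the stationary distribution and
`M_k = ξ_{k−1}ξ_k/(p_kξ_{k−1}+q_kξ_k)`) is equivalent to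
`Σ_k ξ_k Σ_j r_{k+1}⋯r_{k+j−1}(r_{k+j}−1) t_{k+j} > 0`, where `r_k = p_k/q_k`. -/
theorem hitting_criterion_equivalence
    (n : ℕ) [NeZero n] (hn : 2 ≤ n)
    (ξ p : ZMod n → ℝ)
    (hξ : ∀ k, 0 < ξ k) (hp : ∀ k, 0 < p k ∧ p k < 1)
    (hprod : (∏ k ∈ Finset.range n, p (k : ZMod n)) ≠
      ∏ k ∈ Finset.range n, (1 - p (k : ZMod n)))
    (pt qt : ZMod n → ℝ)
    (hpt : ∀ k, pt k = p k * ξ (k - 1) / (p k * ξ (k - 1) + (1 - p k) * ξ k))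
    (hqt : ∀ k, qt k = (1 - p k) * ξ k / (p k * ξ (k - 1) + (1 - p k) * ξ k))
    (π : ZMod n → ℝ)
    (hπ0 : ∀ k, 0 ≤ π k) (hπsum : (∑ k ∈ Finset.range n, π (k : ZMod n)) = 1)
    (hπstat : ∀ k : ZMod n, π k = π (k - 1) * pt (k - 1) + π (k + 1) * qt (k + 1))
    (M r : ZMod n → ℝ)
    (hM : ∀ k, M k = ξ (k - 1) * ξ k / (p k * ξ (k - 1) + (1 - p k) * ξ k))
    (hr : ∀ k, r k = p k / (1 - p k))
    (t : ZMod n → ℝ) :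
    (0 < ∑ k ∈ Finset.range n,
        (p (k : ZMod n) - (1 - p (k : ZMod n))) * π (k : ZMod n) * M (k : ZMod n) *
          t (k : ZMod n)) ↔
    (0 < ∑ k ∈ Finset.range n, ξ (k : ZMod n) *
        ∑ j ∈ Finset.range n,
          (∏ i ∈ Finset.range j, r ((k : ZMod n) + 1 + (i : ZMod n))) *
            (r ((k : ZMod n) + (j : ZMod n) + 1) - 1) *
              t ((k : ZMod n) + (j : ZMod n) + 1)) := by
  have hq : ∀ k : ZMod n, 0 < 1 - p k := fun k => by linarith [(hp k).2]
  have hD : ∀ k : ZMod n, 0 < p k * ξ (k - 1) + (1 - p k) * ξ k := fun k =>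
    add_pos (mul_pos (hp k).1 (hξ _)) (mul_pos (hq k) (hξ _))
  have hrpos : ∀ k : ZMod n, 0 < r k := fun k => by rw [hr]; exact div_pos (hp k).1 (hq k)
  set a : ZMod n → ℝ := fun k => π k * pt k with ha
  set b : ZMod n → ℝ := fun k => π k * qt k with hb
  have hptqt : ∀ k : ZMod n, pt k + qt k = 1 := by
    intro k; rw [hpt, hqt, ← add_div, div_self (hD k).ne']
  have hflow : ∀ k : ZMod n, a k - b (k + 1) = a (k - 1) - b k := by
    intro k
    have h1 : π k = a (k - 1) + b (k + 1) := hπstat k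
    have h2 : a k + b k = π k := by
      show π k * pt k + π k * qt k = π k
      rw [← mul_add, hptqt, mul_one]
    linarith
  set c := a 0 - b (0 + 1) with hcdef
  have hc : ∀ k : ZMod n, a k - b (k + 1) = c := by
    intro k
    have := zmod_const (fun k => a k - b (k + 1)) (fun k => by
      have h := (hflow k).symm
      simpa [sub_add_cancel] using h.symm) k
    rw [hcdef]
    simpa using this
  -- the quantities A and B
  set A : ZMod n → ℝ := fun k => ξ k * a k with hA
  set B : ZMod n → ℝ := fun k => A k - c * ξ k with hB
  have hab : ∀ k : ZMod n, r k * ξ (k - 1) * b k = A k := by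
    intro k
    show r k * ξ (k - 1) * (π k * qt k) = ξ k * (π k * pt k)
    rw [hr, hqt, hpt]
    have h1 : (1 - p k) ≠ 0 := (hq k).ne'
    have h2 : p k * ξ (k - 1) + (1 - p k) * ξ k ≠ 0 := (hD k).ne'
    field_simp
  have hbk : ∀ k : ZMod n, b k = a (k - 1) - c := by
    intro k
    have h := hc (k - 1)
    rw [sub_add_cancel] at h
    linarith
  have hArec : ∀ k : ZMod n, A k = r k * B (k - 1) := by
    intro k
    have h1 := hab k
    have h2 := hbk k
    have : B (k - 1) = ξ (k - 1) * a (k - 1) - c * ξ (k - 1) := rfl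
    rw [this]
    rw [← h1, h2]; ring
  have hBrec : ∀ k : ZMod n, B k = r k * B (k - 1) - c * ξ k := by
    intro k
    have : B k = A k - c * ξ k := rfl
    rw [this, hArec k]
  -- telescoping around the cycle
  have htel : ∀ (m : ℕ) (k : ZMod n),
      B k = (∏ i ∈ Finset.range m, r (k - (i : ZMod n))) * B (k - (m : ZMod n))
        - c * ∑ j ∈ Finset.range m,
            (∏ i ∈ Finset.range j, r (k - (i : ZMod n))) * ξ (k - (j : ZMod n)) := by
    intro m
    induction m with
    | zero => intro k; simp
    | succ m ih =>
      intro k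
      have hk : k - ((m + 1 : ℕ) : ZMod n) = k - (m : ZMod n) - 1 := by push_cast; ring
      rw [Finset.prod_range_succ, Finset.sum_range_succ, hk, ih k, hBrec (k - (m : ZMod n))]
      ring
  set R := ∏ i ∈ Finset.range n, r (i : ZMod n) with hRdef
  have hprodshift : ∀ k : ZMod n,
      ∏ i ∈ Finset.range n, r (k - (i : ZMod n)) = R := by
    intro k
    rw [hRdef, prod_range_zmod (fun x => r (k - x)), prod_range_zmod r]
    exact Fintype.prod_bijective (fun x => k - x) (Equiv.subLeft k).bijective
      (fun x => r (k - x)) r (fun x => rfl)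
  have hRne : R ≠ 1 := by
    have hqprod : 0 < ∏ k ∈ Finset.range n, (1 - p (k : ZMod n)) :=
      Finset.prod_pos fun i _ => hq _
    have hR : R * ∏ k ∈ Finset.range n, (1 - p (k : ZMod n)) =
        ∏ k ∈ Finset.range n, p (k : ZMod n) := by
      rw [hRdef, ← Finset.prod_mul_distrib]
      refine Finset.prod_congr rfl fun i _ => ?_
      rw [hr, div_mul_cancel₀ _ (hq _).ne']
    intro h
    rw [h, one_mul] at hR
    exact hprod hR.symm
  -- key identity
  set S : ZMod n → ℝ := fun k => ∑ j ∈ Finset.range n,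
      (∏ i ∈ Finset.range j, r (k - (i : ZMod n))) * ξ (k - (j : ZMod n)) with hS
  have hkey1 : ∀ k : ZMod n, (R - 1) * B k = c * S k := by
    intro k
    have h := htel n k
    rw [hprodshift k, show k - ((n : ℕ) : ZMod n) = k by simp] at h
    have : S k = ∑ j ∈ Finset.range n,
        (∏ i ∈ Finset.range j, r (k - (i : ZMod n))) * ξ (k - (j : ZMod n)) := rfl
    rw [this]
    linear_combination -h
  have hSpos : ∀ k : ZMod n, 0 < S k := by
    intro k
    have : S k = ∑ j ∈ Finset.range n,
        (∏ i ∈ Finset.range j, r (k - (i : ZMod n))) * ξ (k - (j : ZMod n)) := rfl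
    rw [this]
    refine Finset.sum_pos (fun j _ => mul_pos (Finset.prod_pos fun i _ => hrpos _) (hξ _)) ?_
    exact Finset.nonempty_range_iff.2 (by omega)
  -- sign of c * (R - 1)
  obtain ⟨k0, -, hk0⟩ : ∃ k ∈ Finset.range n, π (k : ZMod n) ≠ 0 := by
    by_contra h
    push_neg at h
    rw [Finset.sum_eq_zero h] at hπsum
    norm_num at hπsum
  set x : ZMod n := (k0 : ZMod n)
  have hπx : 0 < π x := (hπ0 x).lt_of_ne (Ne.symm hk0)
  have hptx : 0 < pt x := by
    rw [hpt]; exact div_pos (mul_pos (hp x).1 (hξ _)) (hD x)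
  have hAx : 0 < A x := by
    have : A x = ξ x * (π x * pt x) := rfl
    rw [this]; exact mul_pos (hξ x) (mul_pos hπx hptx)
  have hBx : 0 < B (x - 1) := by
    have h := hArec x
    nlinarith [hrpos x]
  have hRR : 0 < (R - 1) * (R - 1) := mul_self_pos.mpr (sub_ne_zero.mpr hRne)
  have hcR : 0 < c * (R - 1) := by
    have h1 := hkey1 (x - 1)
    have h2 : (R - 1) * (R - 1) * B (x - 1) = (c * (R - 1)) * S (x - 1) := by
      linear_combination (R - 1) * h1
    have h3 : 0 < (c * (R - 1)) * S (x - 1) := by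
      rw [← h2]; exact mul_pos hRR hBx
    nlinarith [hSpos (x - 1)]
  -- rewrite the LHS sum
  have hLHSterm : ∀ y : ZMod n,
      (p y - (1 - p y)) * π y * M y * t y = (r y - 1) * B (y - 1) * t y := by
    intro y
    have hI : (p y - (1 - p y)) * π y * M y = ξ y * a y - ξ (y - 1) * b y := by
      rw [hM]
      show (p y - (1 - p y)) * π y *
          (ξ (y - 1) * ξ y / (p y * ξ (y - 1) + (1 - p y) * ξ y)) =
        ξ y * (π y * pt y) - ξ (y - 1) * (π y * qt y)
      rw [hpt, hqt]
      field_simp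
    have hA1 : ξ y * a y = A y := rfl
    have hB1 : B (y - 1) = ξ (y - 1) * a (y - 1) - c * ξ (y - 1) := rfl
    have h2 := hbk y
    have h3 := hArec y
    calc (p y - (1 - p y)) * π y * M y * t y
        = (ξ y * a y - ξ (y - 1) * b y) * t y := by rw [hI]
      _ = (r y - 1) * B (y - 1) * t y := by
          rw [hA1, h2, h3, hB1]; ring
  have hLHS : (∑ k ∈ Finset.range n,
      (p (k : ZMod n) - (1 - p (k : ZMod n))) * π (k : ZMod n) * M (k : ZMod n) *
        t (k : ZMod n)) = ∑ y : ZMod n, (r y - 1) * B (y - 1) * t y := by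
    rw [sum_range_zmod (fun y => (p y - (1 - p y)) * π y * M y * t y)]
    exact Finset.sum_congr rfl fun y _ => hLHSterm y
  -- rewrite the RHS sum
  have hRHS : (∑ k ∈ Finset.range n, ξ (k : ZMod n) *
      ∑ j ∈ Finset.range n,
        (∏ i ∈ Finset.range j, r ((k : ZMod n) + 1 + (i : ZMod n))) *
          (r ((k : ZMod n) + (j : ZMod n) + 1) - 1) *
            t ((k : ZMod n) + (j : ZMod n) + 1)) =
      ∑ y : ZMod n, (r y - 1) * t y * S (y - 1) := by
    rw [sum_range_zmod (fun x => ξ x * ∑ j ∈ Finset.range n,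
        (∏ i ∈ Finset.range j, r (x + 1 + (i : ZMod n))) *
          (r (x + (j : ZMod n) + 1) - 1) * t (x + (j : ZMod n) + 1))]
    have step1 : ∀ x : ZMod n, ξ x * (∑ j ∈ Finset.range n,
        (∏ i ∈ Finset.range j, r (x + 1 + (i : ZMod n))) *
          (r (x + (j : ZMod n) + 1) - 1) * t (x + (j : ZMod n) + 1)) =
        ∑ j ∈ Finset.range n, ξ x *
          ((∏ i ∈ Finset.range j, r (x + 1 + (i : ZMod n))) *
            (r (x + (j : ZMod n) + 1) - 1) * t (x + (j : ZMod n) + 1)) := fun x =>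
      Finset.mul_sum _ _ _
    rw [Finset.sum_congr rfl fun x _ => step1 x, Finset.sum_comm]
    -- for each j, reindex x ↦ y - j - 1
    have step2 : ∀ j ∈ Finset.range n,
        (∑ x : ZMod n, ξ x * ((∏ i ∈ Finset.range j, r (x + 1 + (i : ZMod n))) *
            (r (x + (j : ZMod n) + 1) - 1) * t (x + (j : ZMod n) + 1))) =
        ∑ y : ZMod n, (r y - 1) * t y *
          ((∏ i ∈ Finset.range j, r (y - 1 - (i : ZMod n))) * ξ (y - 1 - (j : ZMod n))) := by
      intro j hj
      refine Fintype.sum_bijective (fun x : ZMod n => x + (j : ZMod n) + 1)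
        (by
          have : (fun x : ZMod n => x + (j : ZMod n) + 1) =
              fun x : ZMod n => x + ((j : ZMod n) + 1) := by funext x; ring
          rw [this]
          exact (Equiv.addRight ((j : ZMod n) + 1)).bijective) _ _ ?_
      intro x
      have e1 : ∀ i : ℕ, i < j → x + 1 + (i : ZMod n) =
          (x + (j : ZMod n) + 1) - 1 - ((j - 1 - i : ℕ) : ZMod n) := by
        intro i hi
        have h1 : ((j - 1 - i : ℕ) : ZMod n) = (j : ZMod n) - 1 - (i : ZMod n) := by
          have : j - 1 - i + i + 1 = j := by omega
          calc ((j - 1 - i : ℕ) : ZMod n)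
              = ((j - 1 - i + i + 1 : ℕ) : ZMod n) - (i : ZMod n) - 1 := by
                push_cast; ring
            _ = (j : ZMod n) - 1 - (i : ZMod n) := by rw [this]; ring
        rw [h1]; ring
      have e2 : (∏ i ∈ Finset.range j, r (x + 1 + (i : ZMod n))) =
          ∏ i ∈ Finset.range j, r ((x + (j : ZMod n) + 1) - 1 - (i : ZMod n)) := by
        rw [← Finset.prod_range_reflect (fun i => r ((x + (j : ZMod n) + 1) - 1 - (i : ZMod n))) j]
        refine Finset.prod_congr rfl fun i hi => ?_
        rw [e1 i (Finset.mem_range.1 hi)]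
      have e3 : (x + (j : ZMod n) + 1) - 1 - (j : ZMod n) = x := by ring
      rw [e2, e3]
      ring
    rw [Finset.sum_congr rfl step2, Finset.sum_comm]
    refine Finset.sum_congr rfl fun y _ => ?_
    have : S (y - 1) = ∑ j ∈ Finset.range n,
        (∏ i ∈ Finset.range j, r (y - 1 - (i : ZMod n))) * ξ (y - 1 - (j : ZMod n)) := rfl
    rw [this, Finset.mul_sum]
  rw [hLHS, hRHS]
  -- final comparison
  have hkey : (R - 1) * (∑ y : ZMod n, (r y - 1) * B (y - 1) * t y) =
      c * ∑ y : ZMod n, (r y - 1) * t y * S (y - 1) := by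
    rw [Finset.mul_sum, Finset.mul_sum]
    refine Finset.sum_congr rfl fun y _ => ?_
    have h := hkey1 (y - 1)
    linear_combination (r y - 1) * t y * h
  have h2 : (R - 1) * (R - 1) * (∑ y : ZMod n, (r y - 1) * B (y - 1) * t y) =
      (c * (R - 1)) * ∑ y : ZMod n, (r y - 1) * t y * S (y - 1) := by
    linear_combination (R - 1) * hkey
  constructor
  · intro h
    nlinarith [h2, mul_pos hRR h, hcR]
  · intro h
    nlinarith [h2, mul_pos hcR h, hRR]
end

section
/- Consider the cyclic-chain setup with n = 2, ξ₁ = ξ ∈ (0, 2π) and ξ₂ = 2π − ξ, and p₁, p₂ ∈ [0,1]. Then: (a) π = (1/2, 1/2) is a stationary distribution of the cyclic chain; and (b) with M_k = ξ_{k−1} ξ_k/(p_k ξ_{k−1} + q_k ξ_k) and arbitrary real numbers t₁, t₂, one has (p₁ − q₁) π₁ M₁ t₁ + (p₂ − q₂) π₂ M₂ t₂ > 0 if and only if (p₁ − q₁)(p₂ − q₂) ξ (t₁ − t₂) + 2π ((p₁ − q₁) q₂ t₁ + (p₂ − q₂) p₁ t₂) > 0. -/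
open Finset

/-- Example 2 of the paper (`n = 2`, wedge angles `ξ` and `2π − ξ`): the stationary
distribution is `(1/2, 1/2)` and the hitting criterion
`(p₁−q₁)π₁M₁t₁ + (p₂−q₂)π₂M₂t₂ > 0` is equivalent to
`(p₁−q₁)(p₂−q₂)ξ(t₁−t₂) + 2π((p₁−q₁)q₂t₁ + (p₂−q₂)p₁t₂) > 0`.
States are indexed by `ZMod 2`, the paper's index `1` corresponding to the residue `1`
and the index `2` to the residue `0`. -/
theorem two_membranes_example
    (ξv : ℝ) (hξv : 0 < ξv ∧ ξv < 2 * Real.pi)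
    (p₁ p₂ : ℝ) (hp₁ : 0 ≤ p₁ ∧ p₁ ≤ 1) (hp₂ : 0 ≤ p₂ ∧ p₂ ≤ 1)
    (ξ p : ZMod 2 → ℝ)
    (hξ1 : ξ 1 = ξv) (hξ2 : ξ 0 = 2 * Real.pi - ξv)
    (hpv1 : p 1 = p₁) (hpv2 : p 0 = p₂)
    (pt qt : ZMod 2 → ℝ)
    (hpt : ∀ k, pt k = p k * ξ (k - 1) / (p k * ξ (k - 1) + (1 - p k) * ξ k))
    (hqt : ∀ k, qt k = (1 - p k) * ξ k / (p k * ξ (k - 1) + (1 - p k) * ξ k))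
    (π : ZMod 2 → ℝ) (hπ : ∀ k, π k = 1 / 2)
    (M : ZMod 2 → ℝ)
    (hM : ∀ k, M k = ξ (k - 1) * ξ k / (p k * ξ (k - 1) + (1 - p k) * ξ k))
    (t₁ t₂ : ℝ) :
    ((∀ k, 0 ≤ π k) ∧ π 0 + π 1 = 1 ∧
      (∀ k : ZMod 2, π k = π (k - 1) * pt (k - 1) + π (k + 1) * qt (k + 1))) ∧
    ((0 < (p 1 - (1 - p 1)) * π 1 * M 1 * t₁ + (p 0 - (1 - p 0)) * π 0 * M 0 * t₂) ↔
      0 < (p₁ - (1 - p₁)) * (p₂ - (1 - p₂)) * ξv * (t₁ - t₂) +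
        2 * Real.pi * ((p₁ - (1 - p₁)) * (1 - p₂) * t₁ + (p₂ - (1 - p₂)) * p₁ * t₂)) := by
  obtain ⟨hξ0, hξlt⟩ := hξv
  obtain ⟨hp₁0, hp₁1⟩ := hp₁
  obtain ⟨hp₂0, hp₂1⟩ := hp₂
  have hξ0' : 0 < 2 * Real.pi - ξv := by linarith
  -- denominators
  have hD1 : 0 < p 1 * ξ (1 - 1) + (1 - p 1) * ξ 1 := by
    show 0 < p 1 * ξ 0 + (1 - p 1) * ξ 1
    rw [hξ1, hξ2, hpv1]
    rcases lt_or_ge p₁ 1 with h | h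
    · nlinarith
    · nlinarith
  have hD0 : 0 < p 0 * ξ (0 - 1) + (1 - p 0) * ξ 0 := by
    show 0 < p 0 * ξ 1 + (1 - p 0) * ξ 0
    rw [hξ1, hξ2, hpv2]
    rcases lt_or_ge p₂ 1 with h | h
    · nlinarith
    · nlinarith
  constructor
  · refine ⟨fun k => by rw [hπ k]; norm_num, by rw [hπ 0, hπ 1]; norm_num, ?_⟩
    intro k
    have hsum : ∀ j : ZMod 2, 0 < p j * ξ (j - 1) + (1 - p j) * ξ j →
        pt j + qt j = 1 := by
      intro j hj
      rw [hpt j, hqt j]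
      field_simp
    fin_cases k
    · show π 0 = π (0 - 1) * pt (0 - 1) + π (0 + 1) * qt (0 + 1)
      have e1 : (0 : ZMod 2) - 1 = 1 := by decide
      have e2 : (0 : ZMod 2) + 1 = 1 := by decide
      rw [e1, e2, hπ 0, hπ 1]
      have := hsum 1 hD1
      linarith [this]
    · show π 1 = π (1 - 1) * pt (1 - 1) + π (1 + 1) * qt (1 + 1)
      have e1 : (1 : ZMod 2) - 1 = 0 := by decide
      have e2 : (1 : ZMod 2) + 1 = 0 := by decide
      rw [e1, e2, hπ 1, hπ 0]
      have := hsum 0 hD0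
      linarith [this]
  · set D1 := p 1 * ξ (1 - 1) + (1 - p 1) * ξ 1 with hD1def
    set D0 := p 0 * ξ (0 - 1) + (1 - p 0) * ξ 0 with hD0def
    have key : (p 1 - (1 - p 1)) * π 1 * M 1 * t₁ + (p 0 - (1 - p 0)) * π 0 * M 0 * t₂
        = (((p₁ - (1 - p₁)) * (p₂ - (1 - p₂)) * ξv * (t₁ - t₂) +
          2 * Real.pi * ((p₁ - (1 - p₁)) * (1 - p₂) * t₁ + (p₂ - (1 - p₂)) * p₁ * t₂))
          * (ξv * (2 * Real.pi - ξv))) / (2 * D1 * D0) := by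
      rw [hM 1, hM 0, hπ 1, hπ 0, ← hD1def, ← hD0def]
      have e1 : (1 : ZMod 2) - 1 = 0 := by decide
      have e0 : (0 : ZMod 2) - 1 = 1 := by decide
      rw [hD1def, hD0def, e1, e0, hξ1, hξ2, hpv1, hpv2]
      have d1 : p₁ * (2 * Real.pi - ξv) + (1 - p₁) * ξv ≠ 0 := by
        have := hD1; rw [hD1def] at this
        simp only [e1, hξ1, hξ2, hpv1] at this; linarith
      have d0 : p₂ * ξv + (1 - p₂) * (2 * Real.pi - ξv) ≠ 0 := by
        have := hD0; rw [hD0def] at this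
        simp only [e0, hξ1, hξ2, hpv2] at this; linarith
      set A := p₁ * (2 * Real.pi - ξv) + (1 - p₁) * ξv with hA
      set B := p₂ * ξv + (1 - p₂) * (2 * Real.pi - ξv) with hB
      field_simp
      rw [hA, hB]
      ring
    rw [key]
    have hpos : 0 < (ξv * (2 * Real.pi - ξv)) / (2 * D1 * D0) := by
      apply div_pos (by positivity)
      positivity
    constructor
    · intro h
      have h' : 0 < ((p₁ - (1 - p₁)) * (p₂ - (1 - p₂)) * ξv * (t₁ - t₂) +
          2 * Real.pi * ((p₁ - (1 - p₁)) * (1 - p₂) * t₁ + (p₂ - (1 - p₂)) * p₁ * t₂))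
          * ((ξv * (2 * Real.pi - ξv)) / (2 * D1 * D0)) := by
        calc (0:ℝ) < _ := h
          _ = _ := by ring
      by_contra hc
      push_neg at hc
      nlinarith [mul_nonpos_of_nonpos_of_nonneg hc hpos.le]
    · intro h
      have : 0 < (((p₁ - (1 - p₁)) * (p₂ - (1 - p₂)) * ξv * (t₁ - t₂) +
          2 * Real.pi * ((p₁ - (1 - p₁)) * (1 - p₂) * t₁ + (p₂ - (1 - p₂)) * p₁ * t₂))
          * ((ξv * (2 * Real.pi - ξv)) / (2 * D1 * D0))) := mul_pos h hpos
      calc (0:ℝ) < _ := this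
        _ = _ := by ring
end
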